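/- arXiv:1304.3613 — 5 statements merged into one kernel-verified Lean document; each statement's English description precedes it below -/
import Mathlib

section
/- Let Π be an instance of NotAllEqual 3-SAT with n clauses and G(Π)=(V,E), b, r the associated construction. If E admits a (b,r)-partition, then the coloring assigning to each variable x the color of any edge u^C_x v^C_x (for any original clause C containing x) is well defined and satisfies Π, i.e., every clause of Π contains both a blue and a red variable. -/
/-!
Common definitions for formalizing the NP-completeness reduction from
NotAllEqual 3-SAT to (b,r)-partitions of graphs.

An instance of NotAllEqual 3-SAT with variables in `α` and `n` clauses is
given by `cl : Fin n → Fin 3 → α`, clause `i` consisting of the three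
(distinct) variables `cl i 0, cl i 1, cl i 2`.

The vertex set of the associated graph `G(Π)`: the special vertex `s`,
the `u`-vertices `u i o j` and the `v`-vertices `v i o j`, where `i : Fin n`
is a clause index, `o : Bool` tells whether we are in the gadget of the
original clause (`false`) or of its copy (`true`), and `j : Fin 3` is the
position of a variable inside the clause.
-/

inductive GVert (n : ℕ) : Type
  | s : GVert n
  | u : Fin n → Bool → Fin 3 → GVert n
  | v : Fin n → Bool → Fin 3 → GVert n
  deriving DecidableEq

/-- The occurrences of the variable `x`: the pairs (clause index, position)
where `x` appears. -/
def occs {α : Type*} [DecidableEq α] {n : ℕ} (cl : Fin n → Fin 3 → α) (x : α) :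
    Finset (Fin n × Fin 3) :=
  Finset.univ.filter (fun p => cl p.1 p.2 = x)

/-- The cyclic successor of an occurrence `p` among the occurrences of the
variable sitting at `p`; this is used to build the cycle `Δ_x`. -/
noncomputable def nextOcc {α : Type*} [DecidableEq α] {n : ℕ}
    (cl : Fin n → Fin 3 → α) (p : Fin n × Fin 3) : Fin n × Fin 3 :=
  (occs cl (cl p.1 p.2)).toList.next p (by simp [occs, Finset.mem_toList])

/-- The edges of `G(Π)`: the star at `s`, the triangles on `U^C`, the
matchings `E^C`, and the cycles `Δ_x` (which alternate `v`-vertices of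
original-clause gadgets and of copy gadgets; the cycle for the variable `x`
is `v p₁ false, v p₁ true, v p₂ false, v p₂ true, …` over the occurrences
`p₁, p₂, …` of `x` in cyclic order). -/
inductive EdgeSpec {α : Type*} [DecidableEq α] {n : ℕ} (cl : Fin n → Fin 3 → α) :
    GVert n → GVert n → Prop
  | star (i : Fin n) (o : Bool) (j : Fin 3) : EdgeSpec cl .s (.u i o j)
  | tri (i : Fin n) (o : Bool) {j j' : Fin 3} (h : j ≠ j') :
      EdgeSpec cl (.u i o j) (.u i o j')
  | mat (i : Fin n) (o : Bool) (j : Fin 3) : EdgeSpec cl (.u i o j) (.v i o j)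
  | cycA (p : Fin n × Fin 3) : EdgeSpec cl (.v p.1 false p.2) (.v p.1 true p.2)
  | cycB (p : Fin n × Fin 3) :
      EdgeSpec cl (.v p.1 true p.2) (.v (nextOcc cl p).1 false (nextOcc cl p).2)

/-- The graph `G(Π)` associated to the NotAllEqual 3-SAT instance. -/
noncomputable def gadgetGraph {α : Type*} [DecidableEq α] {n : ℕ}
    (cl : Fin n → Fin 3 → α) : SimpleGraph (GVert n) :=
  SimpleGraph.fromRel (EdgeSpec cl)

/-- The blue outdegree prescription `b`. -/
def bvec (n : ℕ) : GVert n → ℕ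
  | .s => 3 * n
  | .u _ _ _ => 1
  | .v _ o _ => if o then 0 else 1

/-- The red outdegree prescription `r`. -/
def rvec (n : ℕ) : GVert n → ℕ
  | .s => 3 * n
  | .u _ _ _ => 1
  | .v _ o _ => if o then 1 else 0

/-- `dir` is an orientation of the edge set `F`: every directed pair lies in
`F`, and every edge of `F` gets exactly one direction. -/
def IsOrientation {V : Type*} (F : Set (Sym2 V)) (dir : V → V → Prop) : Prop :=
  (∀ a b, dir a b → s(a, b) ∈ F) ∧
    ∀ a b, s(a, b) ∈ F → (dir a b ∨ dir b a) ∧ ¬(dir a b ∧ dir b a)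

/-- `dir` is an `m`-orientation of `F`: an orientation in which exactly `m v`
arcs leave each vertex `v`. -/
def IsMOrientation {V : Type*} (F : Set (Sym2 V)) (m : V → ℕ)
    (dir : V → V → Prop) : Prop :=
  IsOrientation F dir ∧ ∀ v, Nat.card {w // dir v w} = m v

/-- `B` and `R` partition the edges of `G` into two spanning trees. -/
def IsTreePartition {V : Type*} (G B R : SimpleGraph V) : Prop :=
  B ≤ G ∧ R ≤ G ∧ B.IsTree ∧ R.IsTree ∧
    Disjoint B.edgeSet R.edgeSet ∧ B.edgeSet ∪ R.edgeSet = G.edgeSet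

/-- `(B, R)` is a `(b,r)`-partition of (the edge set of) `G`: a partition
into a blue spanning tree having a `b`-orientation and a red spanning tree
having an `r`-orientation. -/
def IsBRPartition {V : Type*} (G : SimpleGraph V) (b r : V → ℕ)
    (B R : SimpleGraph V) : Prop :=
  IsTreePartition G B R ∧
    (∃ d, IsMOrientation B.edgeSet b d) ∧ ∃ d, IsMOrientation R.edgeSet r d

/-- `G` admits some `(b,r)`-partition. -/
def HasBRPartition {V : Type*} (G : SimpleGraph V) (b r : V → ℕ) : Prop :=
  ∃ B R, IsBRPartition G b r B R

/-- The blue/red coloring `c` (`true` = blue, `false` = red) satisfies the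
NotAllEqual 3-SAT instance: every clause contains a blue and a red variable. -/
def NAESatisfies {α : Type*} {n : ℕ} (cl : Fin n → Fin 3 → α) (c : α → Bool) :
    Prop :=
  ∀ i : Fin n, (∃ j, c (cl i j) = true) ∧ ∃ j, c (cl i j) = false

/-- The matching edge `u^C_x v^C_x` at occurrence `p`, in the original gadget
(`o = false`) or the copy gadget (`o = true`). -/
def mEdge {n : ℕ} (p : Fin n × Fin 3) (o : Bool) : Sym2 (GVert n) :=
  s(GVert.u p.1 o p.2, GVert.v p.1 o p.2)

set_option linter.unusedSectionVars false

/-! ### auxiliary development -/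

open SimpleGraph

namespace BRAux

def gvEquiv (n : ℕ) : GVert n ≃ (Unit ⊕ (Fin n × Bool × Fin 3) ⊕ (Fin n × Bool × Fin 3)) where
  toFun x := match x with
    | .s => .inl ()
    | .u i o j => .inr (.inl (i,o,j))
    | .v i o j => .inr (.inr (i,o,j))
  invFun x := match x with
    | .inl _ => .s
    | .inr (.inl (i,o,j)) => .u i o j
    | .inr (.inr (i,o,j)) => .v i o j
  left_inv x := by cases x <;> rfl
  right_inv x := by rcases x with _ | (⟨i,o,j⟩|⟨i,o,j⟩) <;> rfl

noncomputable instance (n : ℕ) : Fintype (GVert n) := Fintype.ofEquiv _ (gvEquiv n).symm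

lemma walk_confined {V : Type*} {G : SimpleGraph V} {S : Set V}
    (hS : ∀ a ∈ S, ∀ b, G.Adj a b → b ∈ S) {a b : V} (ha : a ∈ S) (w : G.Walk a b) :
    b ∈ S := by
  induction w with
  | nil => exact ha
  | cons h w ih => exact ih (hS _ ha _ h)

lemma triangle_not_acyclic {V : Type*} {G : SimpleGraph V} {a b c : V}
    (hab : G.Adj a b) (hbc : G.Adj b c) (hca : G.Adj c a) :
    ¬ G.IsAcyclic := by
  intro h
  have hane : a ≠ b := hab.ne
  have hbne : b ≠ c := hbc.ne
  have hcne : c ≠ a := hca.ne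
  exact h (Walk.cons hab (Walk.cons hbc (Walk.cons hca Walk.nil)))
    (by
      constructor
      · constructor
        · simp [Walk.edges, List.nodup_cons, Sym2.eq_iff]
          aesop
        · simp
      · simp [List.nodup_cons]
        aesop)


lemma pigeon7 {β : Type*} [DecidableEq β] {T : Finset β} (hT : T.card ≤ 6)
    (x0 x1 x2 x3 x4 x5 x6 : β)
    (m0 : x0 ∈ T) (m1 : x1 ∈ T) (m2 : x2 ∈ T) (m3 : x3 ∈ T) (m4 : x4 ∈ T)
    (m5 : x5 ∈ T) (m6 : x6 ∈ T)
    (d01 : x0 ≠ x1) (d02 : x0 ≠ x2) (d03 : x0 ≠ x3) (d04 : x0 ≠ x4) (d05 : x0 ≠ x5)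
    (d06 : x0 ≠ x6)
    (d12 : x1 ≠ x2) (d13 : x1 ≠ x3) (d14 : x1 ≠ x4) (d15 : x1 ≠ x5) (d16 : x1 ≠ x6)
    (d23 : x2 ≠ x3) (d24 : x2 ≠ x4) (d25 : x2 ≠ x5) (d26 : x2 ≠ x6)
    (d34 : x3 ≠ x4) (d35 : x3 ≠ x5) (d36 : x3 ≠ x6)
    (d45 : x4 ≠ x5) (d46 : x4 ≠ x6)
    (d56 : x5 ≠ x6) : False := by
  have hsub : ({x0,x1,x2,x3,x4,x5,x6} : Finset β) ⊆ T := by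
    intro e he
    simp only [Finset.mem_insert, Finset.mem_singleton] at he
    rcases he with rfl|rfl|rfl|rfl|rfl|rfl|rfl <;> assumption
  have hc : ({x0,x1,x2,x3,x4,x5,x6} : Finset β).card = 7 := by
    rw [Finset.card_insert_of_notMem (by simp [d01,d02,d03,d04,d05,d06]),
        Finset.card_insert_of_notMem (by simp [d12,d13,d14,d15,d16]),
        Finset.card_insert_of_notMem (by simp [d23,d24,d25,d26]),
        Finset.card_insert_of_notMem (by simp [d34,d35,d36]),
        Finset.card_insert_of_notMem (by simp [d45,d46]),
        Finset.card_insert_of_notMem (by simp [d56]),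
        Finset.card_singleton]
  have := Finset.card_le_card hsub
  omega

section Setup

variable {α : Type*} [DecidableEq α] {n : ℕ}

/-- unique out-neighbour -/
lemma out1 {dir : GVert n → GVert n → Prop} {F : Set (Sym2 (GVert n))} {m : GVert n → ℕ}
    (h : IsMOrientation F m dir) {a : GVert n} (hm1 : m a = 1) :
    ∃ w, dir a w ∧ ∀ w', dir a w' → w' = w := by
  have := h.2 a
  rw [hm1, Nat.card_eq_one_iff_unique] at this
  obtain ⟨hsub, ⟨w, hw⟩⟩ := this
  exact ⟨w, hw, fun w' hw' => congrArg Subtype.val (hsub.allEq ⟨w', hw'⟩ ⟨w, hw⟩)⟩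

lemma out0 {dir : GVert n → GVert n → Prop} {F : Set (Sym2 (GVert n))} {m : GVert n → ℕ}
    (h : IsMOrientation F m dir) {a : GVert n} (hm1 : m a = 0) :
    ∀ w, ¬ dir a w := by
  have := h.2 a
  rw [hm1, Nat.card_eq_zero] at this
  rcases this with h' | h'
  · exact fun w hw => h'.elim ⟨w, hw⟩
  · exact absurd Subtype.finite h'.not_finite

structure Setup (cl : Fin n → Fin 3 → α) (B R : SimpleGraph (GVert n))
    (dB dR : GVert n → GVert n → Prop) : Prop where
  hBG : B ≤ gadgetGraph cl
  hRG : R ≤ gadgetGraph cl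
  hBt : B.IsTree
  hRt : R.IsTree
  hdisj : Disjoint B.edgeSet R.edgeSet
  hunion : B.edgeSet ∪ R.edgeSet = (gadgetGraph cl).edgeSet
  hBo : IsMOrientation B.edgeSet (bvec n) dB
  hRo : IsMOrientation R.edgeSet (rvec n) dR

variable {cl : Fin n → Fin 3 → α} {B R : SimpleGraph (GVert n)}
  {dB dR : GVert n → GVert n → Prop} (S : Setup cl B R dB dR)
include S



/-! ### edge basics -/

lemma Setup.arcB {a b : GVert n} (h : dB a b) : s(a,b) ∈ B.edgeSet := S.hBo.1.1 a b h
lemma Setup.arcR {a b : GVert n} (h : dR a b) : s(a,b) ∈ R.edgeSet := S.hRo.1.1 a b h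

lemma Setup.notboth_B {a b : GVert n} (h : s(a,b) ∈ B.edgeSet) : ¬ (dB a b ∧ dB b a) :=
  (S.hBo.1.2 a b h).2
lemma Setup.notboth_R {a b : GVert n} (h : s(a,b) ∈ R.edgeSet) : ¬ (dR a b ∧ dR b a) :=
  (S.hRo.1.2 a b h).2

lemma Setup.G_of_B {e : Sym2 (GVert n)} (h : e ∈ B.edgeSet) : e ∈ (gadgetGraph cl).edgeSet :=
  edgeSet_mono S.hBG h
lemma Setup.G_of_R {e : Sym2 (GVert n)} (h : e ∈ R.edgeSet) : e ∈ (gadgetGraph cl).edgeSet :=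
  edgeSet_mono S.hRG h

lemma Setup.not_BR {e : Sym2 (GVert n)} (hb : e ∈ B.edgeSet) (hr : e ∈ R.edgeSet) : False :=
  Set.disjoint_left.mp S.hdisj hb hr

lemma Setup.B_or_R {e : Sym2 (GVert n)} (h : e ∈ (gadgetGraph cl).edgeSet) :
    e ∈ B.edgeSet ∨ e ∈ R.edgeSet := by
  rw [← S.hunion] at h; exact h

lemma Setup.red_of_not_blue {e : Sym2 (GVert n)} (h : e ∈ (gadgetGraph cl).edgeSet)
    (hb : e ∉ B.edgeSet) : e ∈ R.edgeSet := (S.B_or_R h).resolve_left hb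

lemma Setup.spec_cases {a b : GVert n} (h : s(a,b) ∈ (gadgetGraph cl).edgeSet) :
    EdgeSpec cl a b ∨ EdgeSpec cl b a :=
  ((SimpleGraph.fromRel_adj _ a b).mp (((gadgetGraph cl).mem_edgeSet).mp h)).2

lemma Setup.mem_G_of_spec {a b : GVert n} (hne : a ≠ b) (h : EdgeSpec cl a b) :
    s(a,b) ∈ (gadgetGraph cl).edgeSet :=
  ((gadgetGraph cl).mem_edgeSet).mpr ((SimpleGraph.fromRel_adj _ a b).mpr ⟨hne, Or.inl h⟩)

/-! ### the special vertex `s` -/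

lemma Setup.no_arc_into_s : (∀ a, ¬ dB a GVert.s) ∧ (∀ a, ¬ dR a GVert.s) := by
  classical
  set Us : Finset (GVert n) :=
    Finset.univ.image (fun t : Fin n × Bool × Fin 3 => GVert.u t.1 t.2.1 t.2.2) with hUs
  have memUs : ∀ w : GVert n, w ∈ Us ↔ ∃ i o j, w = GVert.u i o j := by
    intro w
    simp only [hUs, Finset.mem_image, Finset.mem_univ, true_and]
    constructor
    · rintro ⟨⟨i,o,j⟩, rfl⟩; exact ⟨i,o,j,rfl⟩
    · rintro ⟨i,o,j,rfl⟩; exact ⟨(i,o,j), rfl⟩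
  have hUcard : Us.card = 3 * n + 3 * n := by
    rw [hUs, Finset.card_image_of_injective _ (by rintro ⟨i,o,j⟩ ⟨i',o',j'⟩ h; simpa using h)]
    simp [Finset.card_univ]
    ring
  have uOfAdj : ∀ w : GVert n, s(GVert.s, w) ∈ (gadgetGraph cl).edgeSet → w ∈ Us := by
    intro w hw
    rcases S.spec_cases hw with h | h
    · cases h with
      | star i o j => exact (memUs _).mpr ⟨i, _, j, rfl⟩
    · cases h
  set OB : Finset (GVert n) := Finset.univ.filter (fun w => dB GVert.s w) with hOB
  set OR : Finset (GVert n) := Finset.univ.filter (fun w => dR GVert.s w) with hOR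
  have cOB : OB.card = 3 * n := by
    have h1 := S.hBo.2 GVert.s
    rwa [Nat.card_eq_fintype_card, Fintype.card_subtype] at h1
  have cOR : OR.card = 3 * n := by
    have h1 := S.hRo.2 GVert.s
    rwa [Nat.card_eq_fintype_card, Fintype.card_subtype] at h1
  have hdisjO : Disjoint OB OR := by
    rw [Finset.disjoint_left]
    intro w hw hw2
    rw [hOB, Finset.mem_filter] at hw
    rw [hOR, Finset.mem_filter] at hw2
    exact S.not_BR (S.arcB hw.2) (S.arcR hw2.2)
  have hsub : OB ∪ OR ⊆ Us := by
    intro w hw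
    rcases Finset.mem_union.mp hw with hw | hw
    · exact uOfAdj w (S.G_of_B (S.arcB (Finset.mem_filter.mp hw).2))
    · exact uOfAdj w (S.G_of_R (S.arcR (Finset.mem_filter.mp hw).2))
  have hEq : OB ∪ OR = Us := by
    apply Finset.eq_of_subset_of_card_le hsub
    rw [hUcard, Finset.card_union_of_disjoint hdisjO, cOB, cOR]
  constructor
  · intro a ha
    have haU : a ∈ Us := uOfAdj a (by
      have := S.arcB ha
      rw [Sym2.eq_swap] at this
      exact S.G_of_B this)
    rw [← hEq] at haU
    rcases Finset.mem_union.mp haU with hw | hw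
    · exact S.notboth_B (S.arcB (Finset.mem_filter.mp hw).2) ⟨(Finset.mem_filter.mp hw).2, ha⟩
    · exact S.not_BR (S.arcB ha) (by
        have := S.arcR (Finset.mem_filter.mp hw).2
        rwa [Sym2.eq_swap] at this)
  · intro a ha
    have haU : a ∈ Us := uOfAdj a (by
      have := S.arcR ha
      rw [Sym2.eq_swap] at this
      exact S.G_of_R this)
    rw [← hEq] at haU
    rcases Finset.mem_union.mp haU with hw | hw
    · exact S.not_BR (by
        have := S.arcB (Finset.mem_filter.mp hw).2
        rwa [Sym2.eq_swap] at this) (S.arcR ha)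
    · exact S.notboth_R (S.arcR (Finset.mem_filter.mp hw).2) ⟨(Finset.mem_filter.mp hw).2, ha⟩


/-! ### arcs determine edges injectively -/

lemma Setup.edge_ne_of_mem {a b : GVert n} (h : s(a,b) ∈ B.edgeSet ∪ R.edgeSet) : a ≠ b := by
  rcases h with h | h
  · exact (B.mem_edgeSet.mp h).ne
  · exact (R.mem_edgeSet.mp h).ne

lemma Setup.arc_eq_BB {a b a' b' : GVert n} (h : dB a b) (h' : dB a' b')
    (he : s(a,b) = s(a',b')) : a = a' ∧ b = b' := by
  rcases Sym2.eq_iff.mp he with ⟨h1, h2⟩ | ⟨h1, h2⟩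
  · exact ⟨h1, h2⟩
  · subst h1; subst h2
    exact absurd ⟨h, h'⟩ (S.notboth_B (S.arcB h))

lemma Setup.arc_eq_RR {a b a' b' : GVert n} (h : dR a b) (h' : dR a' b')
    (he : s(a,b) = s(a',b')) : a = a' ∧ b = b' := by
  rcases Sym2.eq_iff.mp he with ⟨h1, h2⟩ | ⟨h1, h2⟩
  · exact ⟨h1, h2⟩
  · subst h1; subst h2
    exact absurd ⟨h, h'⟩ (S.notboth_R (S.arcR h))

lemma Setup.arc_ne_BR {a b a' b' : GVert n} (h : dB a b) (h' : dR a' b') :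
    s(a,b) ≠ s(a',b') := fun he => S.not_BR (S.arcB h) (he ▸ S.arcR h')

/-! ### neighbours of `u`-vertices and the out-arcs of `u`-vertices -/

lemma Setup.u_nbr {i : Fin n} {o : Bool} {j : Fin 3} {w : GVert n}
    (h : s(GVert.u i o j, w) ∈ (gadgetGraph cl).edgeSet) :
    w = GVert.s ∨ (∃ j', j' ≠ j ∧ w = GVert.u i o j') ∨ w = GVert.v i o j := by
  rcases S.spec_cases h with h | h
  · cases h with
    | tri _ _ hne => exact Or.inr (Or.inl ⟨_, hne.symm, rfl⟩)
    | mat => exact Or.inr (Or.inr rfl)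
  · cases h with
    | star => exact Or.inl rfl
    | tri _ _ hne => exact Or.inr (Or.inl ⟨_, hne, rfl⟩)

lemma Setup.uOutB (i : Fin n) (o : Bool) (j : Fin 3) :
    ∃ w, dB (GVert.u i o j) w ∧ (∀ w', dB (GVert.u i o j) w' → w' = w) ∧
      ((∃ j', j' ≠ j ∧ w = GVert.u i o j') ∨ w = GVert.v i o j) := by
  obtain ⟨w, hw, huniq⟩ := out1 S.hBo (show bvec n (GVert.u i o j) = 1 from rfl)
  refine ⟨w, hw, huniq, ?_⟩
  rcases S.u_nbr (S.G_of_B (S.arcB hw)) with rfl | h | h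
  · exact absurd hw (S.no_arc_into_s.1 _)
  · exact Or.inl h
  · exact Or.inr h

lemma Setup.uOutR (i : Fin n) (o : Bool) (j : Fin 3) :
    ∃ w, dR (GVert.u i o j) w ∧ (∀ w', dR (GVert.u i o j) w' → w' = w) ∧
      ((∃ j', j' ≠ j ∧ w = GVert.u i o j') ∨ w = GVert.v i o j) := by
  obtain ⟨w, hw, huniq⟩ := out1 S.hRo (show rvec n (GVert.u i o j) = 1 from rfl)
  refine ⟨w, hw, huniq, ?_⟩
  rcases S.u_nbr (S.G_of_R (S.arcR hw)) with rfl | h | h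
  · exact absurd hw (S.no_arc_into_s.2 _)
  · exact Or.inl h
  · exact Or.inr h

/-! ### gadget lemma (a): the three matching edges are not monochromatic -/

lemma Setup.not_all_m_B (i : Fin n) (o : Bool)
    (hall : ∀ j : Fin 3, s(GVert.u i o j, GVert.v i o j) ∈ B.edgeSet) : False := by
  have key : ∀ j : Fin 3, ∃ j', j' ≠ j ∧ dR (GVert.u i o j) (GVert.u i o j') := by
    intro j
    obtain ⟨w, hw, -, hcase⟩ := S.uOutR i o j
    rcases hcase with ⟨j', hne, rfl⟩ | rfl
    · exact ⟨j', hne, hw⟩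
    · exact absurd (S.arcR hw) (fun hr => S.not_BR (hall j) hr)
  obtain ⟨a0, ha0, harc0⟩ := key 0
  obtain ⟨a1, ha1, harc1⟩ := key 1
  obtain ⟨a2, ha2, harc2⟩ := key 2
  have no2 : ∀ j j' : Fin 3, dR (GVert.u i o j) (GVert.u i o j') →
      dR (GVert.u i o j') (GVert.u i o j) → False := by
    intro j j' h1 h2
    exact S.notboth_R (S.arcR h1) ⟨h1, h2⟩
  have tri : R.Adj (GVert.u i o 0) (GVert.u i o 1) ∧ R.Adj (GVert.u i o 1) (GVert.u i o 2) ∧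
      R.Adj (GVert.u i o 2) (GVert.u i o 0) := by
    have m01 := S.arcR harc0
    have m12 := S.arcR harc1
    have m20 := S.arcR harc2
    fin_cases a0 <;> fin_cases a1 <;> fin_cases a2 <;>
      simp_all [SimpleGraph.mem_edgeSet] <;>
      first
        | exact (no2 _ _ harc0 harc1).elim
        | exact (no2 _ _ harc0 harc2).elim
        | exact (no2 _ _ harc1 harc2).elim
        | (refine ⟨?_, ?_, ?_⟩ <;>
            first
              | exact m01
              | exact m12
              | exact m20
              | exact m01.symm
              | exact m12.symm
              | exact m20.symm)
  exact triangle_not_acyclic tri.1 tri.2.1 tri.2.2 S.hRt.IsAcyclic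

lemma Setup.not_all_m_R (i : Fin n) (o : Bool)
    (hall : ∀ j : Fin 3, s(GVert.u i o j, GVert.v i o j) ∈ R.edgeSet) : False := by
  have key : ∀ j : Fin 3, ∃ j', j' ≠ j ∧ dB (GVert.u i o j) (GVert.u i o j') := by
    intro j
    obtain ⟨w, hw, -, hcase⟩ := S.uOutB i o j
    rcases hcase with ⟨j', hne, rfl⟩ | rfl
    · exact ⟨j', hne, hw⟩
    · exact absurd (S.arcB hw) (fun hb => S.not_BR hb (hall j))
  obtain ⟨a0, ha0, harc0⟩ := key 0
  obtain ⟨a1, ha1, harc1⟩ := key 1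
  obtain ⟨a2, ha2, harc2⟩ := key 2
  have no2 : ∀ j j' : Fin 3, dB (GVert.u i o j) (GVert.u i o j') →
      dB (GVert.u i o j') (GVert.u i o j) → False := by
    intro j j' h1 h2
    exact S.notboth_B (S.arcB h1) ⟨h1, h2⟩
  have tri : B.Adj (GVert.u i o 0) (GVert.u i o 1) ∧ B.Adj (GVert.u i o 1) (GVert.u i o 2) ∧
      B.Adj (GVert.u i o 2) (GVert.u i o 0) := by
    have m01 := S.arcB harc0
    have m12 := S.arcB harc1
    have m20 := S.arcB harc2
    fin_cases a0 <;> fin_cases a1 <;> fin_cases a2 <;>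
      simp_all [SimpleGraph.mem_edgeSet] <;>
      first
        | exact (no2 _ _ harc0 harc1).elim
        | exact (no2 _ _ harc0 harc2).elim
        | exact (no2 _ _ harc1 harc2).elim
        | (refine ⟨?_, ?_, ?_⟩ <;>
            first
              | exact m01
              | exact m12
              | exact m20
              | exact m01.symm
              | exact m12.symm
              | exact m20.symm)
  exact triangle_not_acyclic tri.1 tri.2.1 tri.2.2 S.hBt.IsAcyclic


/-! ### gadget lemma (b): no arc ever leaves a `v`-vertex towards its `u`-vertex -/

lemma Setup.no_vu_B (i : Fin n) (o : Bool) (j : Fin 3) :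
    ¬ dB (GVert.v i o j) (GVert.u i o j) := by
  intro hx
  obtain ⟨b0, hb0, -, cb0⟩ := S.uOutB i o 0
  obtain ⟨b1, hb1, -, cb1⟩ := S.uOutB i o 1
  obtain ⟨b2, hb2, -, cb2⟩ := S.uOutB i o 2
  obtain ⟨r0, hr0, -, cr0⟩ := S.uOutR i o 0
  obtain ⟨r1, hr1, -, cr1⟩ := S.uOutR i o 1
  obtain ⟨r2, hr2, -, cr2⟩ := S.uOutR i o 2
  classical
  set T : Finset (Sym2 (GVert n)) :=
    {s(GVert.u i o 0, GVert.u i o 1), s(GVert.u i o 0, GVert.u i o 2),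
     s(GVert.u i o 1, GVert.u i o 2), s(GVert.u i o 0, GVert.v i o 0),
     s(GVert.u i o 1, GVert.v i o 1), s(GVert.u i o 2, GVert.v i o 2)} with hTdef
  have hT6 : T.card ≤ 6 := by
    refine (Finset.card_insert_le _ _).trans (Nat.succ_le_succ ?_)
    refine (Finset.card_insert_le _ _).trans (Nat.succ_le_succ ?_)
    refine (Finset.card_insert_le _ _).trans (Nat.succ_le_succ ?_)
    refine (Finset.card_insert_le _ _).trans (Nat.succ_le_succ ?_)
    refine (Finset.card_insert_le _ _).trans (Nat.succ_le_succ ?_)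
    exact le_of_eq (Finset.card_singleton _)
  have memT : ∀ (k : Fin 3) (w : GVert n),
      ((∃ j', j' ≠ k ∧ w = GVert.u i o j') ∨ w = GVert.v i o k) →
      s(GVert.u i o k, w) ∈ T := by
    rintro k w (⟨j', hne, rfl⟩ | rfl)
    · fin_cases k <;> fin_cases j' <;>
        first
          | exact absurd rfl hne
          | (rw [hTdef]; simp [Finset.mem_insert, Sym2.eq_iff])
    · fin_cases k <;> (rw [hTdef]; simp [Finset.mem_insert, Sym2.eq_iff])
  have memx : s(GVert.v i o j, GVert.u i o j) ∈ T := by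
    fin_cases j <;> (rw [hTdef]; simp [Finset.mem_insert, Sym2.eq_iff])
  have ctor : ∀ (a : GVert n) (k : Fin 3), a = GVert.v i o j → a = GVert.u i o k → False := by
    rintro a k rfl h; cases h
  have injU : ∀ (k k' : Fin 3) (w w' : GVert n), GVert.u i o k = GVert.u i o k' → k = k' := by
    intro k k' w w' h; cases h; rfl
  exact pigeon7 hT6
    (s(GVert.v i o j, GVert.u i o j))
    (s(GVert.u i o 0, b0)) (s(GVert.u i o 1, b1)) (s(GVert.u i o 2, b2))
    (s(GVert.u i o 0, r0)) (s(GVert.u i o 1, r1)) (s(GVert.u i o 2, r2))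
    memx (memT 0 _ cb0) (memT 1 _ cb1) (memT 2 _ cb2)
    (memT 0 _ cr0) (memT 1 _ cr1) (memT 2 _ cr2)
    (fun he => ctor _ 0 rfl (S.arc_eq_BB hx hb0 he).1)
    (fun he => ctor _ 1 rfl (S.arc_eq_BB hx hb1 he).1)
    (fun he => ctor _ 2 rfl (S.arc_eq_BB hx hb2 he).1)
    (S.arc_ne_BR hx hr0) (S.arc_ne_BR hx hr1) (S.arc_ne_BR hx hr2)
    (fun he => by have := (S.arc_eq_BB hb0 hb1 he).1; simp at this)
    (fun he => by have := (S.arc_eq_BB hb0 hb2 he).1; simp at this)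
    (S.arc_ne_BR hb0 hr0) (S.arc_ne_BR hb0 hr1) (S.arc_ne_BR hb0 hr2)
    (fun he => by have := (S.arc_eq_BB hb1 hb2 he).1; simp at this)
    (S.arc_ne_BR hb1 hr0) (S.arc_ne_BR hb1 hr1) (S.arc_ne_BR hb1 hr2)
    (S.arc_ne_BR hb2 hr0) (S.arc_ne_BR hb2 hr1) (S.arc_ne_BR hb2 hr2)
    (fun he => by have := (S.arc_eq_RR hr0 hr1 he).1; simp at this)
    (fun he => by have := (S.arc_eq_RR hr0 hr2 he).1; simp at this)
    (fun he => by have := (S.arc_eq_RR hr1 hr2 he).1; simp at this)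

lemma Setup.no_vu_R (i : Fin n) (o : Bool) (j : Fin 3) :
    ¬ dR (GVert.v i o j) (GVert.u i o j) := by
  intro hx
  obtain ⟨b0, hb0, -, cb0⟩ := S.uOutB i o 0
  obtain ⟨b1, hb1, -, cb1⟩ := S.uOutB i o 1
  obtain ⟨b2, hb2, -, cb2⟩ := S.uOutB i o 2
  obtain ⟨r0, hr0, -, cr0⟩ := S.uOutR i o 0
  obtain ⟨r1, hr1, -, cr1⟩ := S.uOutR i o 1
  obtain ⟨r2, hr2, -, cr2⟩ := S.uOutR i o 2
  classical
  set T : Finset (Sym2 (GVert n)) :=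
    {s(GVert.u i o 0, GVert.u i o 1), s(GVert.u i o 0, GVert.u i o 2),
     s(GVert.u i o 1, GVert.u i o 2), s(GVert.u i o 0, GVert.v i o 0),
     s(GVert.u i o 1, GVert.v i o 1), s(GVert.u i o 2, GVert.v i o 2)} with hTdef
  have hT6 : T.card ≤ 6 := by
    refine (Finset.card_insert_le _ _).trans (Nat.succ_le_succ ?_)
    refine (Finset.card_insert_le _ _).trans (Nat.succ_le_succ ?_)
    refine (Finset.card_insert_le _ _).trans (Nat.succ_le_succ ?_)
    refine (Finset.card_insert_le _ _).trans (Nat.succ_le_succ ?_)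
    refine (Finset.card_insert_le _ _).trans (Nat.succ_le_succ ?_)
    exact le_of_eq (Finset.card_singleton _)
  have memT : ∀ (k : Fin 3) (w : GVert n),
      ((∃ j', j' ≠ k ∧ w = GVert.u i o j') ∨ w = GVert.v i o k) →
      s(GVert.u i o k, w) ∈ T := by
    rintro k w (⟨j', hne, rfl⟩ | rfl)
    · fin_cases k <;> fin_cases j' <;>
        first
          | exact absurd rfl hne
          | (rw [hTdef]; simp [Finset.mem_insert, Sym2.eq_iff])
    · fin_cases k <;> (rw [hTdef]; simp [Finset.mem_insert, Sym2.eq_iff])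
  have memx : s(GVert.v i o j, GVert.u i o j) ∈ T := by
    fin_cases j <;> (rw [hTdef]; simp [Finset.mem_insert, Sym2.eq_iff])
  have ctor : ∀ (a : GVert n) (k : Fin 3), a = GVert.v i o j → a = GVert.u i o k → False := by
    rintro a k rfl h; cases h
  exact pigeon7 hT6
    (s(GVert.v i o j, GVert.u i o j))
    (s(GVert.u i o 0, b0)) (s(GVert.u i o 1, b1)) (s(GVert.u i o 2, b2))
    (s(GVert.u i o 0, r0)) (s(GVert.u i o 1, r1)) (s(GVert.u i o 2, r2))
    memx (memT 0 _ cb0) (memT 1 _ cb1) (memT 2 _ cb2)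
    (memT 0 _ cr0) (memT 1 _ cr1) (memT 2 _ cr2)
    (fun he => S.arc_ne_BR hb0 hx he.symm)
    (fun he => S.arc_ne_BR hb1 hx he.symm)
    (fun he => S.arc_ne_BR hb2 hx he.symm)
    (fun he => ctor _ 0 rfl (S.arc_eq_RR hx hr0 he).1)
    (fun he => ctor _ 1 rfl (S.arc_eq_RR hx hr1 he).1)
    (fun he => ctor _ 2 rfl (S.arc_eq_RR hx hr2 he).1)
    (fun he => by have := (S.arc_eq_BB hb0 hb1 he).1; simp at this)
    (fun he => by have := (S.arc_eq_BB hb0 hb2 he).1; simp at this)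
    (S.arc_ne_BR hb0 hr0) (S.arc_ne_BR hb0 hr1) (S.arc_ne_BR hb0 hr2)
    (fun he => by have := (S.arc_eq_BB hb1 hb2 he).1; simp at this)
    (S.arc_ne_BR hb1 hr0) (S.arc_ne_BR hb1 hr1) (S.arc_ne_BR hb1 hr2)
    (S.arc_ne_BR hb2 hr0) (S.arc_ne_BR hb2 hr1) (S.arc_ne_BR hb2 hr2)
    (fun he => by have := (S.arc_eq_RR hr0 hr1 he).1; simp at this)
    (fun he => by have := (S.arc_eq_RR hr0 hr2 he).1; simp at this)
    (fun he => by have := (S.arc_eq_RR hr1 hr2 he).1; simp at this)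

end Setup

/-! ### occurrences -/

section Occ

variable {α : Type*} [DecidableEq α] {n : ℕ} {cl : Fin n → Fin 3 → α}

lemma mem_occs_self (p : Fin n × Fin 3) : p ∈ occs cl (cl p.1 p.2) := by
  simp [occs]

lemma occs_var {p : Fin n × Fin 3} {x : α} (h : p ∈ occs cl x) : cl p.1 p.2 = x := by
  simpa [occs] using h

noncomputable def prevOcc (cl : Fin n → Fin 3 → α) (p : Fin n × Fin 3) : Fin n × Fin 3 :=
  (occs cl (cl p.1 p.2)).toList.prev p (by simp [occs, Finset.mem_toList])

lemma nextOcc_def' {p : Fin n × Fin 3} {x : α} (hp : p ∈ occs cl x) :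
    nextOcc cl p = (occs cl x).toList.next p (Finset.mem_toList.mpr hp) := by
  have h := occs_var hp
  subst h
  rfl

lemma prevOcc_def' {p : Fin n × Fin 3} {x : α} (hp : p ∈ occs cl x) :
    prevOcc cl p = (occs cl x).toList.prev p (Finset.mem_toList.mpr hp) := by
  have h := occs_var hp
  subst h
  rfl

lemma nextOcc_mem {p : Fin n × Fin 3} {x : α} (hp : p ∈ occs cl x) :
    nextOcc cl p ∈ occs cl x := by
  rw [nextOcc_def' hp]
  exact Finset.mem_toList.mp (List.next_mem _ _ _)

lemma prevOcc_mem {p : Fin n × Fin 3} {x : α} (hp : p ∈ occs cl x) :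
    prevOcc cl p ∈ occs cl x := by
  rw [prevOcc_def' hp]
  exact Finset.mem_toList.mp (List.prev_mem _ _ _)

lemma var_nextOcc (p : Fin n × Fin 3) :
    cl (nextOcc cl p).1 (nextOcc cl p).2 = cl p.1 p.2 :=
  occs_var (nextOcc_mem (mem_occs_self p))

lemma var_prevOcc (p : Fin n × Fin 3) :
    cl (prevOcc cl p).1 (prevOcc cl p).2 = cl p.1 p.2 :=
  occs_var (prevOcc_mem (mem_occs_self p))

lemma nextOcc_prevOcc (p : Fin n × Fin 3) : nextOcc cl (prevOcc cl p) = p := by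
  have hp : p ∈ occs cl (cl p.1 p.2) := mem_occs_self p
  have hq : prevOcc cl p ∈ occs cl (cl p.1 p.2) := prevOcc_mem hp
  have key : ∀ (q : Fin n × Fin 3) (hq' : q ∈ (occs cl (cl p.1 p.2)).toList)
      (_ : q = (occs cl (cl p.1 p.2)).toList.prev p (Finset.mem_toList.mpr hp)),
      (occs cl (cl p.1 p.2)).toList.next q hq' = p := by
    rintro q hq' rfl
    exact List.next_prev _ (Finset.nodup_toList _) _ _
  exact (nextOcc_def' hq).trans (key _ _ (prevOcc_def' hp))

lemma prevOcc_nextOcc (p : Fin n × Fin 3) : prevOcc cl (nextOcc cl p) = p := by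
  have hp : p ∈ occs cl (cl p.1 p.2) := mem_occs_self p
  have hq : nextOcc cl p ∈ occs cl (cl p.1 p.2) := nextOcc_mem hp
  have key : ∀ (q : Fin n × Fin 3) (hq' : q ∈ (occs cl (cl p.1 p.2)).toList)
      (_ : q = (occs cl (cl p.1 p.2)).toList.next p (Finset.mem_toList.mpr hp)),
      (occs cl (cl p.1 p.2)).toList.prev q hq' = p := by
    rintro q hq' rfl
    exact List.prev_next _ (Finset.nodup_toList _) _ _
  exact (prevOcc_def' hq).trans (key _ _ (nextOcc_def' hp))

lemma nextOcc_injective {p q : Fin n × Fin 3} (h : nextOcc cl p = nextOcc cl q) : p = q := by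
  have := congrArg (prevOcc cl) h
  rwa [prevOcc_nextOcc, prevOcc_nextOcc] at this

end Occ

/-! ### cycle vertices and edges -/

def vF {n : ℕ} (p : Fin n × Fin 3) : GVert n := .v p.1 false p.2
def vT {n : ℕ} (p : Fin n × Fin 3) : GVert n := .v p.1 true p.2

def eA {n : ℕ} (p : Fin n × Fin 3) : Sym2 (GVert n) := s(vF p, vT p)

noncomputable def eBe {α : Type*} [DecidableEq α] {n : ℕ} (cl : Fin n → Fin 3 → α)
    (p : Fin n × Fin 3) : Sym2 (GVert n) := s(vT p, vF (nextOcc cl p))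

section VertInj

variable {n : ℕ}

lemma vF_inj {p q : Fin n × Fin 3} (h : vF p = vF q) : p = q := by
  injection h with h1 _ h2
  exact Prod.ext h1 h2

lemma vT_inj {p q : Fin n × Fin 3} (h : vT p = vT q) : p = q := by
  injection h with h1 _ h2
  exact Prod.ext h1 h2

lemma vF_ne_vT (p q : Fin n × Fin 3) : vF p ≠ vT q := by
  intro h; injection h with _ h _; cases h

end VertInj

section Shape

variable {α : Type*} [DecidableEq α] {n : ℕ} {cl : Fin n → Fin 3 → α}

lemma spec_shape {a b : GVert n} (h : EdgeSpec cl a b) :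
    (∃ i o j, a = GVert.s ∧ b = GVert.u i o j) ∨
    (∃ i o j j', j ≠ j' ∧ a = GVert.u i o j ∧ b = GVert.u i o j') ∨
    (∃ i o j, a = GVert.u i o j ∧ b = GVert.v i o j) ∨
    (∃ p, a = vF p ∧ b = vT p) ∨
    (∃ p, a = vT p ∧ b = vF (nextOcc cl p)) := by
  cases h with
  | star i o j => exact Or.inl ⟨i, o, j, rfl, rfl⟩
  | tri i o hne => exact Or.inr (Or.inl ⟨_, _, _, _, hne, rfl, rfl⟩)
  | mat i o j => exact Or.inr (Or.inr (Or.inl ⟨i, o, j, rfl, rfl⟩))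
  | cycA p => exact Or.inr (Or.inr (Or.inr (Or.inl ⟨p, rfl, rfl⟩)))
  | cycB p => exact Or.inr (Or.inr (Or.inr (Or.inr ⟨p, rfl, rfl⟩)))

end Shape

section Setup2

variable {α : Type*} [DecidableEq α] {n : ℕ}
variable {cl : Fin n → Fin 3 → α} {B R : SimpleGraph (GVert n)}
  {dB dR : GVert n → GVert n → Prop} (S : Setup cl B R dB dR)
include S

lemma Setup.eA_G (p : Fin n × Fin 3) : eA p ∈ (gadgetGraph cl).edgeSet :=
  S.mem_G_of_spec (vF_ne_vT p p) (EdgeSpec.cycA p)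

lemma Setup.eBe_G (p : Fin n × Fin 3) : eBe cl p ∈ (gadgetGraph cl).edgeSet := by
  have h := S.mem_G_of_spec (Ne.symm (vF_ne_vT (nextOcc cl p) p)) (EdgeSpec.cycB p)
  exact h

lemma Setup.mEdge_G (p : Fin n × Fin 3) (o : Bool) : mEdge p o ∈ (gadgetGraph cl).edgeSet :=
  S.mem_G_of_spec (by intro h; cases h) (EdgeSpec.mat p.1 o p.2)

lemma Setup.vF_nbr {p : Fin n × Fin 3} {w : GVert n}
    (h : s(vF p, w) ∈ (gadgetGraph cl).edgeSet) :
    w = GVert.u p.1 false p.2 ∨ w = vT p ∨ ∃ q, nextOcc cl q = p ∧ w = vT q := by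
  rcases S.spec_cases h with h | h <;>
    rcases spec_shape h with ⟨i,o,j,h1,h2⟩ | ⟨i,o,j,j',hne,h1,h2⟩ | ⟨i,o,j,h1,h2⟩ |
      ⟨q,h1,h2⟩ | ⟨q,h1,h2⟩
  · exact absurd h1 (by simp [vF])
  · exact absurd h1 (by simp [vF])
  · exact absurd h1 (by simp [vF])
  · exact Or.inr (Or.inl (by rw [h2, vF_inj h1]))
  · exact absurd h1 (by simp [vF, vT])
  · exact absurd h2 (by simp [vF])
  · exact absurd h2 (by simp [vF])
  · -- mat : w = u i o j, vF p = v i o j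
    simp only [vF] at h2
    injection h2 with a b c
    subst a; subst b; subst c
    exact Or.inl h1
  · exact absurd h2 (fun hh => vF_ne_vT p q hh)
  · exact Or.inr (Or.inr ⟨q, vF_inj h2.symm, h1⟩)

lemma Setup.vT_nbr {p : Fin n × Fin 3} {w : GVert n}
    (h : s(vT p, w) ∈ (gadgetGraph cl).edgeSet) :
    w = GVert.u p.1 true p.2 ∨ w = vF p ∨ w = vF (nextOcc cl p) := by
  rcases S.spec_cases h with h | h <;>
    rcases spec_shape h with ⟨i,o,j,h1,h2⟩ | ⟨i,o,j,j',hne,h1,h2⟩ | ⟨i,o,j,h1,h2⟩ |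
      ⟨q,h1,h2⟩ | ⟨q,h1,h2⟩
  · exact absurd h1 (by simp [vT])
  · exact absurd h1 (by simp [vT])
  · exact absurd h1 (by simp [vT])
  · exact absurd h1 (fun hh => vF_ne_vT q p hh.symm)
  · exact Or.inr (Or.inr (by rw [h2, vT_inj h1]))
  · exact absurd h2 (by simp [vT])
  · exact absurd h2 (by simp [vT])
  · simp only [vT] at h2
    injection h2 with a b c
    subst a; subst b; subst c
    exact Or.inl h1
  · exact Or.inr (Or.inl (by rw [h1, vT_inj h2.symm]))
  · exact absurd h2 (fun hh => vF_ne_vT (nextOcc cl q) p hh.symm)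

lemma Setup.vFoutB (p : Fin n × Fin 3) :
    ∃ w, dB (vF p) w ∧ (∀ w', dB (vF p) w' → w' = w) ∧
      (w = vT p ∨ ∃ q, nextOcc cl q = p ∧ w = vT q) := by
  obtain ⟨w, hw, huniq⟩ := out1 S.hBo (show bvec n (vF p) = 1 from rfl)
  refine ⟨w, hw, huniq, ?_⟩
  rcases S.vF_nbr (S.G_of_B (S.arcB hw)) with rfl | h | h
  · exact absurd hw (S.no_vu_B p.1 false p.2)
  · exact Or.inl h
  · exact Or.inr h

lemma Setup.vTout0B (p : Fin n × Fin 3) : ∀ w, ¬ dB (vT p) w :=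
  out0 S.hBo (show bvec n (vT p) = 0 from rfl)

lemma Setup.vFout0R (p : Fin n × Fin 3) : ∀ w, ¬ dR (vF p) w :=
  out0 S.hRo (show rvec n (vF p) = 0 from rfl)

lemma Setup.vToutR (p : Fin n × Fin 3) :
    ∃ w, dR (vT p) w ∧ (∀ w', dR (vT p) w' → w' = w) ∧
      (w = vF p ∨ w = vF (nextOcc cl p)) := by
  obtain ⟨w, hw, huniq⟩ := out1 S.hRo (show rvec n (vT p) = 1 from rfl)
  refine ⟨w, hw, huniq, ?_⟩
  rcases S.vT_nbr (S.G_of_R (S.arcR hw)) with rfl | h | h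
  · exact absurd hw (S.no_vu_R p.1 true p.2)
  · exact Or.inl h
  · exact Or.inr h

/-- a blue cycle-A edge is oriented from the false to the true vertex -/
lemma Setup.blue_eA {p : Fin n × Fin 3} (h : eA p ∈ B.edgeSet) : dB (vF p) (vT p) := by
  rcases (S.hBo.1.2 _ _ h).1 with h' | h'
  · exact h'
  · exact absurd h' (S.vTout0B p _)

lemma Setup.red_eA {p : Fin n × Fin 3} (h : eA p ∈ R.edgeSet) : dR (vT p) (vF p) := by
  rw [eA, Sym2.eq_swap] at h
  rcases (S.hRo.1.2 _ _ h).1 with h' | h'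
  · exact h'
  · exact absurd h' (S.vFout0R p _)

lemma Setup.blue_eB {p : Fin n × Fin 3} (h : eBe cl p ∈ B.edgeSet) :
    dB (vF (nextOcc cl p)) (vT p) := by
  rw [eBe, Sym2.eq_swap] at h
  rcases (S.hBo.1.2 _ _ h).1 with h' | h'
  · exact h'
  · exact absurd h' (S.vTout0B p _)

lemma Setup.red_eB {p : Fin n × Fin 3} (h : eBe cl p ∈ R.edgeSet) :
    dR (vT p) (vF (nextOcc cl p)) := by
  rcases (S.hRo.1.2 _ _ h).1 with h' | h'
  · exact h'
  · exact absurd h' (S.vFout0R (nextOcc cl p) _)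

/-- no variable occurs exactly once (given the partition) -/
lemma Setup.next_ne (p : Fin n × Fin 3) : nextOcc cl p ≠ p := by
  intro h
  -- the blue out-arc of `vF p` goes to `vT p`, so `eA p` is blue
  obtain ⟨w, hw, -, hcase⟩ := S.vFoutB p
  have hwT : w = vT p := by
    rcases hcase with h' | ⟨q, hq, h'⟩
    · exact h'
    · rw [h']
      congr 1
      exact nextOcc_injective (by rw [hq, h])
  have hblue : eA p ∈ B.edgeSet := S.arcB (hwT ▸ hw)
  -- the red out-arc of `vT p` goes to `vF p`, so `eA p` is red
  obtain ⟨w', hw', -, hcase'⟩ := S.vToutR p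
  have hwF : w' = vF p := by
    rcases hcase' with h' | h'
    · exact h'
    · rw [h', h]
  have hred : eA p ∈ R.edgeSet := by
    have := S.arcR (hwF ▸ hw')
    rwa [Sym2.eq_swap] at this
  exact S.not_BR hblue hred

/-- the two cycle edges at the true vertex have different colours -/
lemma Setup.c2a {p : Fin n × Fin 3} (h : eA p ∈ B.edgeSet) : eBe cl p ∈ R.edgeSet := by
  obtain ⟨w, hw, -, hcase⟩ := S.vToutR p
  rcases hcase with rfl | rfl
  · exact absurd (by rw [eA, Sym2.eq_swap]; exact S.arcR hw) (fun hr => S.not_BR h hr)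
  · exact S.arcR hw

lemma Setup.c2b {p : Fin n × Fin 3} (h : eA p ∈ R.edgeSet) : eBe cl p ∈ B.edgeSet := by
  by_contra hB
  have hr : eBe cl p ∈ R.edgeSet := S.red_of_not_blue (S.eBe_G p) hB
  have h1 := S.red_eA h
  have h2 := S.red_eB hr
  obtain ⟨w, -, huniq, -⟩ := S.vToutR p
  have h3 := (huniq _ h1).trans (huniq _ h2).symm
  exact S.next_ne p (vF_inj h3.symm)

lemma Setup.blue_eA_or_red {p : Fin n × Fin 3} :
    eA p ∈ B.edgeSet ∨ eA p ∈ R.edgeSet := S.B_or_R (S.eA_G p)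

/-- propagation of the cycle direction -/
lemma Setup.gamma_next_blue {p : Fin n × Fin 3} (h : eA p ∈ B.edgeSet) :
    eA (nextOcc cl p) ∈ B.edgeSet := by
  have hr : eBe cl p ∈ R.edgeSet := S.c2a h
  obtain ⟨w, hw, -, hcase⟩ := S.vFoutB (nextOcc cl p)
  rcases hcase with rfl | ⟨q, hq, rfl⟩
  · exact S.arcB hw
  · -- the blue out-arc of `vF (next p)` runs along `eBe q`; but `q = p` and `eBe p` is red
    have hqp : q = p := nextOcc_injective hq
    subst hqp
    have : eBe cl q ∈ B.edgeSet := by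
      rw [eBe, Sym2.eq_swap]
      exact S.arcB (by rwa [hq] at hw ⊢)
    exact absurd this (fun hb => S.not_BR hb hr)

lemma Setup.gamma_next_red {p : Fin n × Fin 3} (h : eA p ∈ R.edgeSet) :
    eA (nextOcc cl p) ∈ R.edgeSet := by
  have hb : eBe cl p ∈ B.edgeSet := S.c2b h
  by_contra hB
  have hblue : eA (nextOcc cl p) ∈ B.edgeSet :=
    (S.B_or_R (S.eA_G _)).resolve_right hB
  have h1 := S.blue_eA hblue
  have h2 := S.blue_eB hb
  obtain ⟨w, -, huniq, -⟩ := S.vFoutB (nextOcc cl p)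
  have h3 := (huniq _ h1).trans (huniq _ h2).symm
  exact S.next_ne p (vT_inj h3)

lemma Setup.not_confined_B {S' : Set (GVert n)}
    (h : ∀ a ∈ S', ∀ b, B.Adj a b → b ∈ S') {a : GVert n} (ha : a ∈ S')
    (hs : GVert.s ∉ S') : False :=
  (S.hBt.isConnected.preconnected a GVert.s).elim
    (fun w => hs (walk_confined h ha w))

lemma Setup.not_confined_R {S' : Set (GVert n)}
    (h : ∀ a ∈ S', ∀ b, R.Adj a b → b ∈ S') {a : GVert n} (ha : a ∈ S')
    (hs : GVert.s ∉ S') : False :=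
  (S.hRt.isConnected.preconnected a GVert.s).elim
    (fun w => hs (walk_confined h ha w))

lemma Setup.gamma_prev_blue {q p : Fin n × Fin 3} (hq : nextOcc cl q = p)
    (h : eA p ∈ B.edgeSet) : eA q ∈ B.edgeSet := by
  rcases S.B_or_R (S.eA_G q) with hb | hr
  · exact hb
  · exact absurd (hq ▸ S.gamma_next_red hr) (fun x => S.not_BR h x)

lemma Setup.gamma_prev_red {q p : Fin n × Fin 3} (hq : nextOcc cl q = p)
    (h : eA p ∈ R.edgeSet) : eA q ∈ R.edgeSet := by
  rcases S.B_or_R (S.eA_G q) with hb | hr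
  · exact absurd (hq ▸ S.gamma_next_blue hb) (fun x => S.not_BR x h)
  · exact hr

lemma Setup.mF_eq (p : Fin n × Fin 3) : mEdge p false = s(GVert.u p.1 false p.2, vF p) := rfl
lemma Setup.mT_eq (p : Fin n × Fin 3) : mEdge p true = s(GVert.u p.1 true p.2, vT p) := rfl

/-- C4 : if `eA p` is blue, its two matching edges are not both red -/
lemma Setup.C4 {p : Fin n × Fin 3} (hA : eA p ∈ B.edgeSet)
    (h1 : mEdge p false ∈ R.edgeSet) (h2 : mEdge p true ∈ R.edgeSet) : False := by
  refine S.not_confined_B (S' := {vF p, vT p}) ?_ (Set.mem_insert _ _)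
    (by rintro (h | h) <;> simp [vF, vT] at h)
  rintro a (rfl | rfl) b hab
  · have hE : s(vF p, b) ∈ B.edgeSet := B.mem_edgeSet.mpr hab
    rcases S.vF_nbr (S.G_of_B hE) with rfl | rfl | ⟨q, hq, rfl⟩
    · exact absurd h1 (fun hr => S.not_BR (by rwa [S.mF_eq, Sym2.eq_swap]) hr)
    · exact Set.mem_insert_of_mem _ rfl
    · -- `eBe q` is red, contradiction
      have hq' : eA q ∈ B.edgeSet := S.gamma_prev_blue hq hA
      have := S.c2a hq'
      rw [eBe, hq] at this
      exact absurd hE (fun hb => S.not_BR (by rwa [Sym2.eq_swap] at this ⊢) this)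
  · have hE : s(vT p, b) ∈ B.edgeSet := B.mem_edgeSet.mpr hab
    rcases S.vT_nbr (S.G_of_B hE) with rfl | rfl | rfl
    · exact absurd h2 (fun hr => S.not_BR (by rwa [S.mT_eq, Sym2.eq_swap]) hr)
    · exact Set.mem_insert _ _
    · exact absurd (S.c2a hA) (fun hr => S.not_BR hE hr)

/-- C5 : if `eA p` is blue, `mEdge p true` and `mEdge (next p) false` are not both blue -/
lemma Setup.C5 {p : Fin n × Fin 3} (hA : eA p ∈ B.edgeSet)
    (h1 : mEdge p true ∈ B.edgeSet) (h2 : mEdge (nextOcc cl p) false ∈ B.edgeSet) :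
    False := by
  refine S.not_confined_R (S' := {vT p, vF (nextOcc cl p)}) ?_ (Set.mem_insert _ _)
    (by rintro (h | h) <;> simp [vF, vT] at h)
  rintro a (rfl | rfl) b hab
  · have hE : s(vT p, b) ∈ R.edgeSet := R.mem_edgeSet.mpr hab
    rcases S.vT_nbr (S.G_of_R hE) with rfl | rfl | rfl
    · exact absurd h1 (fun hb => S.not_BR hb (by rwa [S.mT_eq, Sym2.eq_swap]))
    · exact absurd hA (fun hb => S.not_BR hb (by rwa [eA, Sym2.eq_swap]))
    · exact Set.mem_insert_of_mem _ rfl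
  · have hE : s(vF (nextOcc cl p), b) ∈ R.edgeSet := R.mem_edgeSet.mpr hab
    rcases S.vF_nbr (S.G_of_R hE) with rfl | rfl | ⟨q, hq, rfl⟩
    · exact absurd h2 (fun hb => S.not_BR hb (by rwa [S.mF_eq, Sym2.eq_swap]))
    · exact absurd (S.gamma_next_blue hA) (fun hb => S.not_BR hb hE)
    · have : q = p := nextOcc_injective hq
      subst this
      exact Set.mem_insert _ _

/-- C4' : if `eA p` is red, its two matching edges are not both blue -/
lemma Setup.C4' {p : Fin n × Fin 3} (hA : eA p ∈ R.edgeSet)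
    (h1 : mEdge p false ∈ B.edgeSet) (h2 : mEdge p true ∈ B.edgeSet) : False := by
  refine S.not_confined_R (S' := {vF p, vT p}) ?_ (Set.mem_insert _ _)
    (by rintro (h | h) <;> simp [vF, vT] at h)
  rintro a (rfl | rfl) b hab
  · have hE : s(vF p, b) ∈ R.edgeSet := R.mem_edgeSet.mpr hab
    rcases S.vF_nbr (S.G_of_R hE) with rfl | rfl | ⟨q, hq, rfl⟩
    · exact absurd h1 (fun hb => S.not_BR hb (by rwa [S.mF_eq, Sym2.eq_swap]))
    · exact Set.mem_insert_of_mem _ rfl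
    · have hq' : eA q ∈ R.edgeSet := S.gamma_prev_red hq hA
      have := S.c2b hq'
      rw [eBe, hq] at this
      exact absurd hE (fun hr => S.not_BR (by rwa [Sym2.eq_swap] at this) hr)
  · have hE : s(vT p, b) ∈ R.edgeSet := R.mem_edgeSet.mpr hab
    rcases S.vT_nbr (S.G_of_R hE) with rfl | rfl | rfl
    · exact absurd h2 (fun hb => S.not_BR hb (by rwa [S.mT_eq, Sym2.eq_swap]))
    · exact Set.mem_insert _ _
    · exact absurd (S.c2b hA) (fun hb => S.not_BR hb hE)

/-- C5' : if `eA p` is red, `mEdge p true` and `mEdge (next p) false` are not both red -/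
lemma Setup.C5' {p : Fin n × Fin 3} (hA : eA p ∈ R.edgeSet)
    (h1 : mEdge p true ∈ R.edgeSet) (h2 : mEdge (nextOcc cl p) false ∈ R.edgeSet) :
    False := by
  refine S.not_confined_B (S' := {vT p, vF (nextOcc cl p)}) ?_ (Set.mem_insert _ _)
    (by rintro (h | h) <;> simp [vF, vT] at h)
  rintro a (rfl | rfl) b hab
  · have hE : s(vT p, b) ∈ B.edgeSet := B.mem_edgeSet.mpr hab
    rcases S.vT_nbr (S.G_of_B hE) with rfl | rfl | rfl
    · exact absurd h1 (fun hr => S.not_BR (by rwa [S.mT_eq, Sym2.eq_swap]) hr)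
    · exact absurd hA (fun hr => S.not_BR (by rwa [eA, Sym2.eq_swap]) hr)
    · exact Set.mem_insert_of_mem _ rfl
  · have hE : s(vF (nextOcc cl p), b) ∈ B.edgeSet := B.mem_edgeSet.mpr hab
    rcases S.vF_nbr (S.G_of_B hE) with rfl | rfl | ⟨q, hq, rfl⟩
    · exact absurd h2 (fun hr => S.not_BR (by rwa [S.mF_eq, Sym2.eq_swap]) hr)
    · exact absurd (S.gamma_next_red hA) (fun hr => S.not_BR hE hr)
    · have : q = p := nextOcc_injective hq
      subst this
      exact Set.mem_insert _ _

lemma Setup.gnext (p : Fin n × Fin 3) :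
    eA (nextOcc cl p) ∈ B.edgeSet ↔ eA p ∈ B.edgeSet := by
  constructor
  · intro h
    by_contra hb
    exact S.not_BR h (S.gamma_next_red (S.red_of_not_blue (S.eA_G p) hb))
  · exact S.gamma_next_blue

lemma Setup.X12 :
    (∀ p : Fin n × Fin 3,
        ¬(mEdge p false ∈ B.edgeSet ↔ mEdge p true ∈ B.edgeSet)) ∧
    (∀ p : Fin n × Fin 3,
        ¬(mEdge p true ∈ B.edgeSet ↔ mEdge (nextOcc cl p) false ∈ B.edgeSet)) := by
  classical
  have EA : ∀ p : Fin n × Fin 3,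
      (mEdge p false ∈ B.edgeSet ↔ eA p ∈ B.edgeSet) ∨
      (mEdge p true ∈ B.edgeSet ↔ eA p ∈ B.edgeSet) := by
    intro p
    by_cases hγ : eA p ∈ B.edgeSet
    · by_cases hf : mEdge p false ∈ B.edgeSet
      · exact Or.inl (iff_of_true hf hγ)
      · refine Or.inr (iff_of_true ?_ hγ)
        by_contra ht
        exact S.C4 hγ (S.red_of_not_blue (S.mEdge_G p false) hf)
          (S.red_of_not_blue (S.mEdge_G p true) ht)
    · have hr : eA p ∈ R.edgeSet := S.red_of_not_blue (S.eA_G p) hγ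
      by_cases hf : mEdge p false ∈ B.edgeSet
      · by_cases ht : mEdge p true ∈ B.edgeSet
        · exact (S.C4' hr hf ht).elim
        · exact Or.inr (iff_of_false ht hγ)
      · exact Or.inl (iff_of_false hf hγ)
  have EB : ∀ p : Fin n × Fin 3,
      (mEdge p true ∈ B.edgeSet ↔ ¬ (eA p ∈ B.edgeSet)) ∨
      (mEdge (nextOcc cl p) false ∈ B.edgeSet ↔ ¬ (eA p ∈ B.edgeSet)) := by
    intro p
    by_cases hγ : eA p ∈ B.edgeSet
    · by_cases ht : mEdge p true ∈ B.edgeSet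
      · by_cases hf : mEdge (nextOcc cl p) false ∈ B.edgeSet
        · exact (S.C5 hγ ht hf).elim
        · exact Or.inr (iff_of_false hf (not_not_intro hγ))
      · exact Or.inl (iff_of_false ht (not_not_intro hγ))
    · have hr : eA p ∈ R.edgeSet := S.red_of_not_blue (S.eA_G p) hγ
      by_cases ht : mEdge p true ∈ B.edgeSet
      · exact Or.inl (iff_of_true ht hγ)
      · refine Or.inr (iff_of_true ?_ hγ)
        by_contra hf
        exact S.C5' hr (S.red_of_not_blue (S.mEdge_G p true) ht)
          (S.red_of_not_blue (S.mEdge_G (nextOcc cl p) false) hf)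
  set Φ : (Fin n × Fin 3) × Bool → (Fin n × Fin 3) × Bool := fun pc =>
    if pc.2 = false then
      (if mEdge pc.1 false ∈ B.edgeSet ↔ eA pc.1 ∈ B.edgeSet
        then (pc.1, false) else (pc.1, true))
    else
      (if mEdge pc.1 true ∈ B.edgeSet ↔ ¬ (eA pc.1 ∈ B.edgeSet)
        then (pc.1, true) else (nextOcc cl pc.1, false)) with hΦ
  have Φf : ∀ p : Fin n × Fin 3, Φ (p, false) =
      if mEdge p false ∈ B.edgeSet ↔ eA p ∈ B.edgeSet
        then (p, false) else (p, true) := by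
    intro p; simp [hΦ]
  have Φt : ∀ p : Fin n × Fin 3, Φ (p, true) =
      if mEdge p true ∈ B.edgeSet ↔ ¬ (eA p ∈ B.edgeSet)
        then (p, true) else (nextOcc cl p, false) := by
    intro p; simp [hΦ]
  have hinj : Function.Injective Φ := by
    rintro ⟨p, bp⟩ ⟨q, bq⟩ hpq
    cases bp <;> cases bq
    · rw [Φf p, Φf q] at hpq
      by_cases h1 : mEdge p false ∈ B.edgeSet ↔ eA p ∈ B.edgeSet <;>
        by_cases h2 : mEdge q false ∈ B.edgeSet ↔ eA q ∈ B.edgeSet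
      · rw [if_pos h1, if_pos h2] at hpq; simp at hpq; rw [hpq]
      · rw [if_pos h1, if_neg h2] at hpq; simp at hpq
      · rw [if_neg h1, if_pos h2] at hpq; simp at hpq
      · rw [if_neg h1, if_neg h2] at hpq; simp at hpq; rw [hpq]
    · rw [Φf p, Φt q] at hpq
      by_cases h1 : mEdge p false ∈ B.edgeSet ↔ eA p ∈ B.edgeSet <;>
        by_cases h2 : mEdge q true ∈ B.edgeSet ↔ ¬(eA q ∈ B.edgeSet)
      · rw [if_pos h1, if_pos h2] at hpq; simp at hpq
      · rw [if_pos h1, if_neg h2] at hpq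
        simp at hpq
        subst hpq
        have hE := (EB q).resolve_left h2
        have hg := S.gnext q
        tauto
      · rw [if_neg h1, if_pos h2] at hpq
        simp at hpq
        rw [← hpq] at h2
        have hA := (EA p).resolve_left h1
        tauto
      · rw [if_neg h1, if_neg h2] at hpq; simp at hpq
    · rw [Φt p, Φf q] at hpq
      by_cases h1 : mEdge p true ∈ B.edgeSet ↔ ¬(eA p ∈ B.edgeSet) <;>
        by_cases h2 : mEdge q false ∈ B.edgeSet ↔ eA q ∈ B.edgeSet
      · rw [if_pos h1, if_pos h2] at hpq; simp at hpq
      · rw [if_pos h1, if_neg h2] at hpq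
        simp at hpq
        rw [hpq] at h1
        have hA := (EA q).resolve_left h2
        tauto
      · rw [if_neg h1, if_pos h2] at hpq
        simp at hpq
        rw [← hpq] at h2
        have hE := (EB p).resolve_left h1
        have hg := S.gnext p
        tauto
      · rw [if_neg h1, if_neg h2] at hpq; simp at hpq
    · rw [Φt p, Φt q] at hpq
      by_cases h1 : mEdge p true ∈ B.edgeSet ↔ ¬(eA p ∈ B.edgeSet) <;>
        by_cases h2 : mEdge q true ∈ B.edgeSet ↔ ¬(eA q ∈ B.edgeSet)
      · rw [if_pos h1, if_pos h2] at hpq; simp at hpq; rw [hpq]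
      · rw [if_pos h1, if_neg h2] at hpq; simp at hpq
      · rw [if_neg h1, if_pos h2] at hpq; simp at hpq
      · rw [if_neg h1, if_neg h2] at hpq
        simp at hpq
        rw [nextOcc_injective hpq]
  have hsurj : Function.Surjective Φ := Finite.injective_iff_surjective.mp hinj
  constructor
  · intro p h
    by_cases h1 : mEdge p false ∈ B.edgeSet ↔ eA p ∈ B.edgeSet
    · have h2 : mEdge p true ∈ B.edgeSet ↔ eA p ∈ B.edgeSet := h.symm.trans h1
      obtain ⟨⟨q, c⟩, hq⟩ := hsurj (p, true)
      cases c
      · rw [Φf q] at hq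
        split_ifs at hq with hc
        · simp at hq
        · simp only [Prod.mk.injEq] at hq
          rw [hq.1] at hc
          exact hc h1
      · rw [Φt q] at hq
        split_ifs at hq with hc
        · simp only [Prod.mk.injEq] at hq
          rw [hq.1] at hc
          tauto
        · simp at hq
    · have hmT := (EA p).resolve_left h1
      exact h1 (h.trans hmT)
  · intro p h
    by_cases h1 : mEdge p true ∈ B.edgeSet ↔ ¬ (eA p ∈ B.edgeSet)
    · have h2 : mEdge (nextOcc cl p) false ∈ B.edgeSet ↔ ¬ (eA p ∈ B.edgeSet) :=
        h.symm.trans h1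
      obtain ⟨⟨q, c⟩, hq⟩ := hsurj (nextOcc cl p, false)
      cases c
      · rw [Φf q] at hq
        split_ifs at hq with hc
        · simp only [Prod.mk.injEq] at hq
          rw [hq.1] at hc
          have hg := S.gnext p
          tauto
        · simp at hq
      · rw [Φt q] at hq
        split_ifs at hq with hc
        · simp at hq
        · simp only [Prod.mk.injEq] at hq
          rw [nextOcc_injective hq.1] at hc
          exact hc h1
    · have hmF := (EB p).resolve_left h1
      exact h1 (h.trans hmF)

/-- the colour of the original matching edge is invariant along the cycle -/
lemma Setup.step (p : Fin n × Fin 3) :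
    mEdge (nextOcc cl p) false ∈ B.edgeSet ↔ mEdge p false ∈ B.edgeSet := by
  have h1 := S.X12.1 p
  have h2 := S.X12.2 p
  tauto

lemma Setup.nae (i : Fin n) :
    (∃ j : Fin 3, mEdge (i, j) false ∈ B.edgeSet) ∧
    (∃ j : Fin 3, mEdge (i, j) false ∉ B.edgeSet) := by
  constructor
  · by_contra h
    push_neg at h
    exact S.not_all_m_R i false
      (fun j => S.red_of_not_blue (S.mEdge_G (i, j) false) (h j))
  · by_contra h
    push_neg at h
    exact S.not_all_m_B i false (fun j => h j)

lemma Setup.const_on_var {p q : Fin n × Fin 3} (hvar : cl p.1 p.2 = cl q.1 q.2) :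
    (mEdge p false ∈ B.edgeSet ↔ mEdge q false ∈ B.edgeSet) := by
  have hnd := Finset.nodup_toList (occs cl (cl q.1 q.2))
  have key : ∀ (k : ℕ) (hk : k < (occs cl (cl q.1 q.2)).toList.length),
      (mEdge ((occs cl (cl q.1 q.2)).toList.get ⟨k, hk⟩) false ∈ B.edgeSet ↔
        mEdge ((occs cl (cl q.1 q.2)).toList.get
          ⟨0, Nat.lt_of_le_of_lt (Nat.zero_le _) hk⟩) false ∈ B.edgeSet) := by
    intro k
    induction k with
    | zero => intro hk; exact Iff.rfl
    | succ m ih =>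
      intro hk
      have hm : m < (occs cl (cl q.1 q.2)).toList.length := Nat.lt_of_succ_lt hk
      have hmemm : (occs cl (cl q.1 q.2)).toList.get ⟨m, hm⟩ ∈ occs cl (cl q.1 q.2) :=
        Finset.mem_toList.mp (List.get_mem _ _)
      have hnext : nextOcc cl ((occs cl (cl q.1 q.2)).toList.get ⟨m, hm⟩) =
          (occs cl (cl q.1 q.2)).toList.get ⟨m + 1, hk⟩ := by
        rw [nextOcc_def' hmemm]
        simp only [List.get_eq_getElem]
        rw [List.next_getElem _ hnd m hm]
        simp only [Nat.mod_eq_of_lt hk]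
      have hstep := S.step ((occs cl (cl q.1 q.2)).toList.get ⟨m, hm⟩)
      rw [hnext] at hstep
      exact hstep.trans (ih hm)
  have hp : p ∈ (occs cl (cl q.1 q.2)).toList := by
    rw [Finset.mem_toList]
    simpa [occs] using hvar
  have hq : q ∈ (occs cl (cl q.1 q.2)).toList :=
    Finset.mem_toList.mpr (mem_occs_self q)
  obtain ⟨⟨kpv, hkpv⟩, hkp⟩ := List.mem_iff_get.mp hp
  obtain ⟨⟨kqv, hkqv⟩, hkq⟩ := List.mem_iff_get.mp hq
  have e1 := key kpv hkpv
  have e2 := key kqv hkqv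
  rw [hkp] at e1
  rw [hkq] at e2
  exact e1.trans e2.symm

end Setup2

end BRAux

/-- From any `(b,r)`-partition, coloring each variable by the
color of (any of) its original matching edges is well defined (a single
coloring `c` works for all occurrences) and satisfies `Π`. -/
theorem stmt1 {α : Type*} [DecidableEq α] {n : ℕ} (cl : Fin n → Fin 3 → α)
    (hcl : ∀ i, Function.Injective (cl i)) (B R : SimpleGraph (GVert n))
    (hBR : IsBRPartition (gadgetGraph cl) (bvec n) (rvec n) B R) :
    ∃ c : α → Bool,
      (∀ p : Fin n × Fin 3, (c (cl p.1 p.2) = true ↔ mEdge p false ∈ B.edgeSet)) ∧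
      NAESatisfies cl c := by
  classical
  obtain ⟨⟨hBG, hRG, hBt, hRt, hdisj, huni⟩, ⟨dB, hBo⟩, ⟨dR, hRo⟩⟩ := hBR
  have S : BRAux.Setup cl B R dB dR := ⟨hBG, hRG, hBt, hRt, hdisj, huni, hBo, hRo⟩
  set c : α → Bool := fun x => if h : (occs cl x).Nonempty then
      (if mEdge h.choose false ∈ B.edgeSet then true else false) else false with hc
  have hc1 : ∀ p : Fin n × Fin 3, (c (cl p.1 p.2) = true ↔ mEdge p false ∈ B.edgeSet) := by
    intro p
    have hne : (occs cl (cl p.1 p.2)).Nonempty := ⟨p, BRAux.mem_occs_self p⟩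
    rw [hc]
    simp only []
    rw [dif_pos hne]
    have hch : hne.choose ∈ occs cl (cl p.1 p.2) := hne.choose_spec
    have hiff : mEdge hne.choose false ∈ B.edgeSet ↔ mEdge p false ∈ B.edgeSet :=
      S.const_on_var (by rw [BRAux.occs_var hch])
    by_cases hm : mEdge hne.choose false ∈ B.edgeSet
    · rw [if_pos hm]
      simpa using hiff.mp hm
    · rw [if_neg hm]
      have hnp : mEdge p false ∉ B.edgeSet := fun hb => hm (hiff.mpr hb)
      simp [hnp]
  refine ⟨c, hc1, ?_⟩
  intro i
  obtain ⟨⟨j1, hj1⟩, ⟨j2, hj2⟩⟩ := S.nae i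
  refine ⟨⟨j1, (hc1 (i, j1)).mpr hj1⟩, ⟨j2, ?_⟩⟩
  cases h : c (cl i j2) with
  | false => rfl
  | true => exact absurd ((hc1 (i, j2)).mp h) hj2
end

section
/- Let Π be an instance of NotAllEqual 3-SAT with n clauses and G(Π)=(V,E), b, r the associated construction. In every (b,r)-partition of E, with any b-orientation of the blue tree and r-orientation of the red tree, every edge incident to the special vertex s is oriented away from s. -/
private def gvertEnc {n : ℕ} : GVert n → Option (Fin n × Bool × Fin 3 × Bool)
  | .s => none
  | .u i o j => some (i, o, j, false)
  | .v i o j => some (i, o, j, true)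

private lemma gvertEnc_inj {n : ℕ} : Function.Injective (gvertEnc (n := n)) := by
  intro a b h
  cases a <;> cases b <;> simp_all [gvertEnc]

instance {n : ℕ} : Finite (GVert n) := Finite.of_injective _ gvertEnc_inj

private lemma adj_s_iff {α : Type*} [DecidableEq α] {n : ℕ} (cl : Fin n → Fin 3 → α)
    (w : GVert n) :
    (gadgetGraph cl).Adj GVert.s w ↔ ∃ i o j, w = GVert.u i o j := by
  rw [gadgetGraph, SimpleGraph.fromRel_adj]
  constructor
  · rintro ⟨hne, h | h⟩
    · cases h with
      | star i o j => exact ⟨i, o, j, rfl⟩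
    · cases h
  · rintro ⟨i, o, j, rfl⟩
    exact ⟨fun h => (nomatch h), Or.inl (EdgeSpec.star i o j)⟩

/-- In every `(b,r)`-partition of `G(Π)`, with any
`b`-orientation of the blue tree and `r`-orientation of the red tree, every
edge incident to the special vertex `s` is oriented away from `s`. -/
theorem stmt4 {α : Type*} [DecidableEq α] {n : ℕ} (cl : Fin n → Fin 3 → α)
    (hcl : ∀ i, Function.Injective (cl i)) (B R : SimpleGraph (GVert n))
    (hpart : IsTreePartition (gadgetGraph cl) B R)
    (db dr : GVert n → GVert n → Prop)
    (hb : IsMOrientation B.edgeSet (bvec n) db)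
    (hr : IsMOrientation R.edgeSet (rvec n) dr) :
    ∀ w, (gadgetGraph cl).Adj GVert.s w →
      (s(GVert.s, w) ∈ B.edgeSet → db GVert.s w) ∧
      (s(GVert.s, w) ∈ R.edgeSet → dr GVert.s w) := by
  classical
  obtain ⟨hBG, hRG, _, _, hdisj, hunion⟩ := hpart
  obtain ⟨⟨hb1, hb2⟩, hbcard⟩ := hb
  obtain ⟨⟨hr1, hr2⟩, hrcard⟩ := hr
  set NG : Set (GVert n) := {w | s(GVert.s, w) ∈ (gadgetGraph cl).edgeSet} with hNG
  set NB : Set (GVert n) := {w | s(GVert.s, w) ∈ B.edgeSet} with hNB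
  set NR : Set (GVert n) := {w | s(GVert.s, w) ∈ R.edgeSet} with hNR
  set OB : Set (GVert n) := {w | db GVert.s w} with hOB
  set OR : Set (GVert n) := {w | dr GVert.s w} with hOR
  have hOBsub : OB ⊆ NB := fun w hw => hb1 _ _ hw
  have hORsub : OR ⊆ NR := fun w hw => hr1 _ _ hw
  have hOBcard : OB.ncard = 3 * n := by
    rw [← Nat.card_coe_set_eq]
    exact hbcard GVert.s
  have hORcard : OR.ncard = 3 * n := by
    rw [← Nat.card_coe_set_eq]
    exact hrcard GVert.s
  have hNGcard : NG.ncard = 6 * n := by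
    have hrange : NG = Set.range (fun p : Fin n × Bool × Fin 3 =>
        GVert.u p.1 p.2.1 p.2.2) := by
      ext w
      simp only [hNG, Set.mem_setOf_eq, SimpleGraph.mem_edgeSet, Set.mem_range]
      rw [adj_s_iff]
      constructor
      · rintro ⟨i, o, j, rfl⟩; exact ⟨(i, o, j), rfl⟩
      · rintro ⟨⟨i, o, j⟩, rfl⟩; exact ⟨i, o, j, rfl⟩
    have hinj : Function.Injective (fun p : Fin n × Bool × Fin 3 =>
        GVert.u p.1 p.2.1 p.2.2) := by
      rintro ⟨i, o, j⟩ ⟨i', o', j'⟩ h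
      simp_all
    rw [hrange, ← Nat.card_coe_set_eq, Nat.card_range_of_injective hinj]
    simp only [Nat.card_eq_fintype_card, Fintype.card_prod, Fintype.card_fin,
      Fintype.card_bool]
    ring
  have hU : NB ∪ NR = NG := by
    ext w
    constructor
    · rintro (h | h)
      · show s(GVert.s, w) ∈ (gadgetGraph cl).edgeSet
        rw [← hunion]; exact Set.mem_union_left _ h
      · show s(GVert.s, w) ∈ (gadgetGraph cl).edgeSet
        rw [← hunion]; exact Set.mem_union_right _ h
    · intro h
      have : s(GVert.s, w) ∈ B.edgeSet ∪ R.edgeSet := by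
        rw [hunion]; exact h
      rcases this with h | h
      · exact Or.inl h
      · exact Or.inr h
  have hD : Disjoint NB NR := by
    rw [Set.disjoint_left]
    intro w hwB hwR
    exact Set.disjoint_left.mp hdisj hwB hwR
  have hsum : NB.ncard + NR.ncard = 6 * n := by
    rw [← Set.ncard_union_eq hD (Set.toFinite _) (Set.toFinite _), hU, hNGcard]
  have hNBle : OB.ncard ≤ NB.ncard := Set.ncard_le_ncard hOBsub (Set.toFinite _)
  have hNRle : OR.ncard ≤ NR.ncard := Set.ncard_le_ncard hORsub (Set.toFinite _)
  have hOBeq : OB = NB :=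
    Set.eq_of_subset_of_ncard_le hOBsub (by omega) (Set.toFinite _)
  have hOReq : OR = NR :=
    Set.eq_of_subset_of_ncard_le hORsub (by omega) (Set.toFinite _)
  intro w _
  constructor
  · intro h
    have hw : w ∈ NB := h
    rw [← hOBeq] at hw
    exact hw
  · intro h
    have hw : w ∈ NR := h
    rw [← hOReq] at hw
    exact hw
end

section
/- Let Π be an instance of NotAllEqual 3-SAT with n clauses and G(Π)=(V,E), b, r the associated construction. In every (b,r)-partition of E, with any b-orientation of the blue tree and r-orientation of the red tree, for every clause C (original or copy), each of the three arcs corresponding to the matching edges E^C is oriented from its endpoint in U^C towards its endpoint v^C. -/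
section aux

def gvEquiv (n : ℕ) : GVert n ≃ Option ((Fin n × Bool × Fin 3) ⊕ (Fin n × Bool × Fin 3)) where
  toFun x := match x with
    | .s => none
    | .u i o j => some (.inl (i,o,j))
    | .v i o j => some (.inr (i,o,j))
  invFun x := match x with
    | none => .s
    | some (.inl (i,o,j)) => .u i o j
    | some (.inr (i,o,j)) => .v i o j
  left_inv x := by cases x <;> rfl
  right_inv x := by rcases x with _ | (⟨i,o,j⟩|⟨i,o,j⟩) <;> rfl

noncomputable instance (n : ℕ) : Fintype (GVert n) := Fintype.ofEquiv _ (gvEquiv n).symm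

lemma card_GVert (n : ℕ) : Fintype.card (GVert n) = 12 * n + 1 := by
  rw [Fintype.card_congr (gvEquiv n)]
  simp
  ring

lemma no_out {V : Type*} [Finite V] {d : V → V → Prop} {v : V}
    (h : Nat.card {w // d v w} = 0) (w : V) : ¬ d v w := by
  intro hw
  rw [Nat.card_eq_zero] at h
  rcases h with h | h
  · exact h.elim ⟨w, hw⟩
  · exact h.not_finite inferInstance

lemma unique_out {V : Type*} {d : V → V → Prop} {v : V}
    (h : Nat.card {w // d v w} = 1) :
    ∃ w, d v w ∧ ∀ w', d v w' → w' = w := by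
  rw [Nat.card_eq_one_iff_unique] at h
  obtain ⟨hs, ⟨⟨w, hw⟩⟩⟩ := h
  exact ⟨w, hw, fun w' hw' => congrArg Subtype.val (hs.elim ⟨w', hw'⟩ ⟨w, hw⟩)⟩

def oth : Fin 3 → Fin 3 × Fin 3
  | 0 => (1,2)
  | 1 => (0,2)
  | 2 => (0,1)

/-- the four edge families -/
def Ssu (n : ℕ) : Set (Sym2 (GVert n)) :=
  Set.range (fun x : Fin n × Bool × Fin 3 => s(GVert.s, GVert.u x.1 x.2.1 x.2.2))

def Suu (n : ℕ) : Set (Sym2 (GVert n)) :=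
  Set.range (fun x : Fin n × Bool × Fin 3 =>
    s(GVert.u x.1 x.2.1 (oth x.2.2).1, GVert.u x.1 x.2.1 (oth x.2.2).2))

def Suv (n : ℕ) : Set (Sym2 (GVert n)) :=
  Set.range (fun x : Fin n × Bool × Fin 3 => s(GVert.u x.1 x.2.1 x.2.2, GVert.v x.1 x.2.1 x.2.2))

def VV (n : ℕ) : Set (Sym2 (GVert n)) :=
  {e | ∃ a b : Fin n × Fin 3, e = s(GVert.v a.1 false a.2, GVert.v b.1 true b.2)}

lemma spec_mem {α : Type*} [DecidableEq α] {n : ℕ} {cl : Fin n → Fin 3 → α}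
    {a b : GVert n} (h : EdgeSpec cl a b) :
    s(a, b) ∈ Ssu n ∪ Suu n ∪ Suv n ∪ VV n := by
  cases h with
  | star i o j => exact Or.inl (Or.inl (Or.inl ⟨(i, o, j), rfl⟩))
  | @tri i o j j' hj =>
      refine Or.inl (Or.inl (Or.inr ?_))
      have : ∃ k, oth k = (j, j') ∨ oth k = (j', j) := by revert hj; revert j j'; decide
      obtain ⟨k, hk | hk⟩ := this
      · exact ⟨(i, o, k), by simp only [hk]⟩
      · exact ⟨(i, o, k), by simp only [hk]; exact Sym2.eq_swap⟩
  | mat i o j => exact Or.inl (Or.inr ⟨(i, o, j), rfl⟩)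
  | cycA p => exact Or.inr ⟨p, p, rfl⟩
  | cycB p => exact Or.inr ⟨nextOcc cl p, p, Sym2.eq_swap.symm⟩

lemma edge_decomp {α : Type*} [DecidableEq α] {n : ℕ} (cl : Fin n → Fin 3 → α) :
    (gadgetGraph cl).edgeSet
      = Ssu n ∪ Suu n ∪ Suv n ∪ ((gadgetGraph cl).edgeSet ∩ VV n) := by
  apply Set.Subset.antisymm
  · intro e he
    induction e using Sym2.ind with
    | _ a b =>
      have he' := he
      rw [SimpleGraph.mem_edgeSet, gadgetGraph, SimpleGraph.fromRel_adj] at he'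
      obtain ⟨hne, hs | hs⟩ := he'
      · rcases spec_mem hs with h | h
        · exact Or.inl h
        · exact Or.inr ⟨he, h⟩
      · rw [Sym2.eq_swap]
        rcases spec_mem hs with h | h
        · exact Or.inl h
        · exact Or.inr ⟨by rwa [Sym2.eq_swap], h⟩
  · rintro e (((⟨⟨i,o,j⟩, rfl⟩ | ⟨⟨i,o,k⟩, rfl⟩) | ⟨⟨i,o,j⟩, rfl⟩) | hm)
    · rw [SimpleGraph.mem_edgeSet, gadgetGraph, SimpleGraph.fromRel_adj]
      exact ⟨by simp, Or.inl (.star i o j)⟩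
    · rw [SimpleGraph.mem_edgeSet, gadgetGraph, SimpleGraph.fromRel_adj]
      have hk : (oth k).1 ≠ (oth k).2 := by revert k; decide
      exact ⟨by simp [hk], Or.inl (.tri i o hk)⟩
    · rw [SimpleGraph.mem_edgeSet, gadgetGraph, SimpleGraph.fromRel_adj]
      exact ⟨by simp, Or.inl (.mat i o j)⟩
    · exact hm.1
end aux

section cards
variable {n : ℕ}

lemma ncard_Ssu : (Ssu n).ncard = 6 * n := by
  rw [Ssu, ← Nat.card_coe_set_eq, Nat.card_range_of_injective]
  · simp [Nat.card_eq_fintype_card]; ring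
  · rintro ⟨i,o,j⟩ ⟨i',o',j'⟩ h
    simp [Sym2.eq_iff] at h
    obtain ⟨rfl, rfl, rfl⟩ := h
    rfl

lemma ncard_Suu : (Suu n).ncard = 6 * n := by
  rw [Suu, ← Nat.card_coe_set_eq, Nat.card_range_of_injective]
  · simp [Nat.card_eq_fintype_card]; ring
  · rintro ⟨i,o,k⟩ ⟨i',o',k'⟩ h
    simp only [Sym2.eq_iff, GVert.u.injEq] at h
    have hd : ∀ k k' : Fin 3, (oth k = oth k' ∨ oth k = ((oth k').2, (oth k').1)) → k = k' := by
      decide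
    have hk : k = k' := by
      apply hd
      rcases h with ⟨⟨-,-,h1⟩,⟨-,-,h2⟩⟩ | ⟨⟨-,-,h1⟩,⟨-,-,h2⟩⟩
      · exact Or.inl (Prod.ext h1 h2)
      · exact Or.inr (Prod.ext h1 h2)
    rcases h with ⟨⟨rfl,rfl,-⟩,-⟩ | ⟨⟨rfl,rfl,-⟩,-⟩ <;> rw [hk]

lemma ncard_Suv : (Suv n).ncard = 6 * n := by
  rw [Suv, ← Nat.card_coe_set_eq, Nat.card_range_of_injective]
  · simp [Nat.card_eq_fintype_card]; ring
  · rintro ⟨i,o,j⟩ ⟨i',o',j'⟩ h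
    simp [Sym2.eq_iff] at h
    obtain ⟨rfl, rfl, rfl⟩ := h
    rfl

lemma disj_su_uu : Disjoint (Ssu n) (Suu n) := by
  rw [Set.disjoint_left]
  rintro e ⟨x, rfl⟩ ⟨y, hy⟩
  simp [Sym2.eq_iff] at hy

lemma disj_su_uv : Disjoint (Ssu n) (Suv n) := by
  rw [Set.disjoint_left]
  rintro e ⟨x, rfl⟩ ⟨y, hy⟩
  simp [Sym2.eq_iff] at hy

lemma disj_uu_uv : Disjoint (Suu n) (Suv n) := by
  rw [Set.disjoint_left]
  rintro e ⟨x, rfl⟩ ⟨y, hy⟩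
  simp [Sym2.eq_iff] at hy

lemma disj_vv {S : Set (Sym2 (GVert n))} : Disjoint (Ssu n ∪ Suu n ∪ Suv n) (S ∩ VV n) := by
  rw [Set.disjoint_left]
  rintro e ((⟨x, rfl⟩ | ⟨x, rfl⟩) | ⟨x, rfl⟩) ⟨-, a, b, hy⟩ <;>
    simp [Sym2.eq_iff] at hy

end cards

lemma tree_ncard {n : ℕ} {B : SimpleGraph (GVert n)} (h : B.IsTree) :
    B.edgeSet.ncard = 12 * n := by
  haveI : Fintype B.edgeSet := Fintype.ofFinite _
  haveI : DecidableRel B.Adj := Classical.decRel _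
  have hc := h.card_edgeFinset
  rw [card_GVert] at hc
  rw [Set.ncard_eq_toFinset_card']
  have : B.edgeSet.toFinset = B.edgeFinset := by
    simp [SimpleGraph.edgeFinset]
  rw [this]; omega

lemma svv_ncard {α : Type*} [DecidableEq α] {n : ℕ} (cl : Fin n → Fin 3 → α)
    {B R : SimpleGraph (GVert n)} (hpart : IsTreePartition (gadgetGraph cl) B R) :
    ((gadgetGraph cl).edgeSet ∩ VV n).ncard = 6 * n := by
  obtain ⟨-, -, hBt, hRt, hdisj, hunion⟩ := hpart
  have hE : (gadgetGraph cl).edgeSet.ncard = 24 * n := by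
    rw [← hunion, Set.ncard_union_eq hdisj, tree_ncard hBt, tree_ncard hRt]
    ring
  have hdecomp := edge_decomp cl
  rw [hdecomp, Set.ncard_union_eq disj_vv,
    Set.ncard_union_eq (Set.disjoint_union_left.2 ⟨disj_su_uv, disj_uu_uv⟩),
    Set.ncard_union_eq disj_su_uu, ncard_Ssu, ncard_Suu, ncard_Suv] at hE
  omega


lemma keyLemma {α : Type*} [DecidableEq α] {n : ℕ} (cl : Fin n → Fin 3 → α)
    (B R : SimpleGraph (GVert n))
    (hpart : IsTreePartition (gadgetGraph cl) B R)
    (db dr : GVert n → GVert n → Prop)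
    (hb : IsMOrientation B.edgeSet (bvec n) db)
    (hr : IsMOrientation R.edgeSet (rvec n) dr)
    (c : Bool) (i : Fin n) (j : Fin 3)
    (hbad : (bif c then dr else db) (GVert.v i c j) (GVert.u i c j)) : False := by
  have hsvv := svv_ncard cl hpart
  obtain ⟨-, -, -, -, -, hunion⟩ := hpart
  -- unique out-neighbours of the `v`-vertices in their own color
  choose outB houtB huniqB using
    (fun p : Fin n × Fin 3 => unique_out
      (show Nat.card {w // db (GVert.v p.1 false p.2) w} = 1 by
        simpa [bvec] using hb.2 (GVert.v p.1 false p.2)))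
  choose outR houtR huniqR using
    (fun p : Fin n × Fin 3 => unique_out
      (show Nat.card {w // dr (GVert.v p.1 true p.2) w} = 1 by
        simpa [rvec] using hr.2 (GVert.v p.1 true p.2)))
  have hzeroB : ∀ (p : Fin n × Fin 3) (w : GVert n), ¬ db (GVert.v p.1 true p.2) w :=
    fun p => no_out (by simpa [bvec] using hb.2 (GVert.v p.1 true p.2))
  have hzeroR : ∀ (p : Fin n × Fin 3) (w : GVert n), ¬ dr (GVert.v p.1 false p.2) w :=
    fun p => no_out (by simpa [rvec] using hr.2 (GVert.v p.1 false p.2))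
  set out : Bool → (Fin n × Fin 3) → GVert n :=
    fun c' p => bif c' then outR p else outB p with hout
  -- every vv-edge is in one of the two ranges
  have hsub1 : (gadgetGraph cl).edgeSet ∩ VV n ⊆
      Set.range (fun p : Fin n × Fin 3 => s(GVert.v p.1 false p.2, out false p)) ∪
      Set.range (fun p : Fin n × Fin 3 => s(GVert.v p.1 true p.2, out true p)) := by
    rintro e ⟨heE, a, b, rfl⟩
    rw [← hunion] at heE
    rcases heE with hm | hm
    · have harc := ((hb.1.2 _ _ hm).1).resolve_right (hzeroB b _)
      refine Or.inl ⟨a, ?_⟩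
      show s(GVert.v a.1 false a.2, outB a) = s(GVert.v a.1 false a.2, GVert.v b.1 true b.2)
      rw [← huniqB a _ harc]
    · have harc := ((hr.1.2 _ _ hm).1).resolve_left (hzeroR a _)
      refine Or.inr ⟨b, ?_⟩
      show s(GVert.v b.1 true b.2, outR b) = s(GVert.v a.1 false a.2, GVert.v b.1 true b.2)
      rw [← huniqR b _ harc]
      exact Sym2.eq_swap
  have hsub2 : ∀ e ∈ (gadgetGraph cl).edgeSet ∩ VV n,
      e ∈ Set.range (fun p : Fin n × Fin 3 => s(GVert.v p.1 c p.2, out c p)) ∪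
        Set.range (fun p : Fin n × Fin 3 => s(GVert.v p.1 (!c) p.2, out (!c) p)) := by
    intro e he
    have h1 := hsub1 he
    cases c
    · simpa using h1
    · rw [Set.union_comm]; simpa using h1
  -- the bad arc identifies `out c (i,j)` as a u-vertex
  have hbadout : GVert.u i c j = out c (i, j) := by
    cases c
    · exact huniqB (i, j) _ hbad
    · exact huniqR (i, j) _ hbad
  have hnotin : s(GVert.v i c j, out c (i, j)) ∉ (gadgetGraph cl).edgeSet ∩ VV n := by
    rintro ⟨-, a, b, heq⟩
    rw [← hbadout] at heq
    simp [Sym2.eq_iff] at heq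
  have hsub3 : (gadgetGraph cl).edgeSet ∩ VV n ⊆
      (Set.range (fun p : Fin n × Fin 3 => s(GVert.v p.1 c p.2, out c p)) \
        {s(GVert.v i c j, out c (i, j))}) ∪
      Set.range (fun p : Fin n × Fin 3 => s(GVert.v p.1 (!c) p.2, out (!c) p)) := by
    intro e he
    rcases hsub2 e he with h | h
    · exact Or.inl ⟨h, fun hmem => hnotin (Set.mem_singleton_iff.1 hmem ▸ he)⟩
    · exact Or.inr h
  -- counting
  have hrange : ∀ c' : Bool,
      (Set.range (fun p : Fin n × Fin 3 => s(GVert.v p.1 c' p.2, out c' p))).ncard ≤ 3 * n := by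
    intro c'
    rw [← Set.image_univ]
    refine le_trans (Set.ncard_image_le (Set.toFinite _)) (le_of_eq ?_)
    rw [Set.ncard_univ]
    simp [Nat.card_eq_fintype_card]
    ring
  have hmemrange : s(GVert.v i c j, out c (i, j)) ∈
      Set.range (fun p : Fin n × Fin 3 => s(GVert.v p.1 c p.2, out c p)) := ⟨(i, j), rfl⟩
  have hdiff := Set.ncard_diff_singleton_of_mem hmemrange
  have hle := Set.ncard_le_ncard hsub3 (Set.toFinite _)
  have hun := Set.ncard_union_le
    (Set.range (fun p : Fin n × Fin 3 => s(GVert.v p.1 c p.2, out c p)) \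
      {s(GVert.v i c j, out c (i, j))})
    (Set.range (fun p : Fin n × Fin 3 => s(GVert.v p.1 (!c) p.2, out (!c) p)))
  have hc := hrange c
  have hnc := hrange (!c)
  have hn : 0 < n := i.pos
  omega

/-- In every `(b,r)`-partition of `G(Π)`, with any
`b`-orientation of the blue tree and `r`-orientation of the red tree, every
matching edge `u^C v^C` of every clause gadget (original or copy) is oriented
from its endpoint in `U^C` towards its endpoint `v^C`. -/
theorem stmt5 {α : Type*} [DecidableEq α] {n : ℕ} (cl : Fin n → Fin 3 → α)
    (hcl : ∀ i, Function.Injective (cl i)) (B R : SimpleGraph (GVert n))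
    (hpart : IsTreePartition (gadgetGraph cl) B R)
    (db dr : GVert n → GVert n → Prop)
    (hb : IsMOrientation B.edgeSet (bvec n) db)
    (hr : IsMOrientation R.edgeSet (rvec n) dr) :
    ∀ (i : Fin n) (o : Bool) (j : Fin 3),
      (s(GVert.u i o j, GVert.v i o j) ∈ B.edgeSet →
        db (GVert.u i o j) (GVert.v i o j)) ∧
      (s(GVert.u i o j, GVert.v i o j) ∈ R.edgeSet →
        dr (GVert.u i o j) (GVert.v i o j)) := by
  intro i o j
  constructor
  · intro hmem
    rcases (hb.1.2 _ _ hmem).1 with h | h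
    · exact h
    · exfalso
      cases o
      · exact keyLemma cl B R hpart db dr hb hr false i j h
      · exact no_out (by simpa [bvec] using hb.2 (GVert.v i true j)) _ h
  · intro hmem
    rcases (hr.1.2 _ _ hmem).1 with h | h
    · exact h
    · exfalso
      cases o
      · exact no_out (by simpa [rvec] using hr.2 (GVert.v i false j)) _ h
      · exact keyLemma cl B R hpart db dr hb hr true i j h
end

section
/- Let Π be an instance of NotAllEqual 3-SAT with n clauses and G(Π)=(V,E), b, r the associated construction. In every (b,r)-partition of E, for every clause C (original or copy), the matching E^C contains at least one edge of the blue spanning tree and at least one edge of the red spanning tree. -/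
/-! ### Auxiliary machinery -/

private def GVert.code {n : ℕ} : GVert n → Option (Bool × Fin n × Bool × Fin 3)
  | .s => none
  | .u i o j => some (false, i, o, j)
  | .v i o j => some (true, i, o, j)

instance inst_s6 {n : ℕ} : Finite (GVert n) :=
  Finite.of_injective GVert.code
    (by rintro a b h; cases a <;> cases b <;> simp_all [GVert.code])

private lemma uinj {n : ℕ} : Function.Injective
    (fun x : Fin n × Bool × Fin 3 => GVert.u x.1 x.2.1 x.2.2) := by
  rintro ⟨a, b, c⟩ ⟨d, e, f⟩ h; simp_all

private lemma range_card {n : ℕ} :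
    (Set.range (fun x : Fin n × Bool × Fin 3 => GVert.u x.1 x.2.1 x.2.2)).ncard = 6 * n := by
  rw [Set.ncard_eq_toFinset_card', Set.toFinset_range,
    Finset.card_image_of_injective _ uinj]
  simp [Fintype.card_prod]
  ring

/-- In a forest there is no triangle. -/
private lemma no_triangle {V : Type*} {T : SimpleGraph V} (h : T.IsAcyclic) {a b c : V}
    (hab : T.Adj a b) (hbc : T.Adj b c) (hca : T.Adj c a) : False := by
  have hc : (SimpleGraph.Walk.cons hab (SimpleGraph.Walk.cons hbc
      (SimpleGraph.Walk.cons hca SimpleGraph.Walk.nil))).IsCycle := by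
    have h1 := hab.ne
    have h2 := hbc.ne
    have h3 := hca.ne
    simp [SimpleGraph.Walk.isCycle_def, SimpleGraph.Walk.isTrail_def, Sym2.eq_iff]
    aesop
  exact h _ hc

private lemma count_aux {V : Type*} [Finite V] {n : ℕ} (N S1 S2 D1 D2 : Set V)
    (h1 : D1 ⊆ S1) (h2 : D2 ⊆ S2) (hdisj : Disjoint S1 S2) (hun : S1 ∪ S2 = N)
    (hN : N.ncard ≤ 6 * n) (hc1 : D1.ncard = 3 * n) (hc2 : D2.ncard = 3 * n) :
    S1 ⊆ D1 := by
  intro w0 hw0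
  by_contra hnd
  have hsub : D1 ⊆ S1 \ {w0} := fun x hx => ⟨h1 hx, by rintro rfl; exact hnd hx⟩
  have e1 : (S1 \ {w0}).ncard = S1.ncard - 1 :=
    Set.ncard_diff_singleton_of_mem hw0
  have l1 : D1.ncard ≤ S1.ncard - 1 := e1 ▸ Set.ncard_le_ncard hsub (S1 \ {w0}).toFinite
  have l2 : D2.ncard ≤ S2.ncard := Set.ncard_le_ncard h2 S2.toFinite
  have l3 : S1.ncard + S2.ncard = N.ncard := by
    rw [← hun, Set.ncard_union_eq hdisj S1.toFinite S2.toFinite]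
  have l4 : 1 ≤ S1.ncard := (Set.ncard_pos S1.toFinite).mpr ⟨w0, hw0⟩
  omega

private lemma adj_s {α : Type*} [DecidableEq α] {n : ℕ} {cl : Fin n → Fin 3 → α} {w : GVert n}
    (h : (gadgetGraph cl).Adj GVert.s w) : ∃ i o j, w = GVert.u i o j := by
  rw [gadgetGraph, SimpleGraph.fromRel_adj] at h
  rcases h with ⟨-, h | h⟩ <;> cases h
  exact ⟨_, _, _, rfl⟩

private lemma adj_u {α : Type*} [DecidableEq α] {n : ℕ} {cl : Fin n → Fin 3 → α}
    {i : Fin n} {o : Bool} {j : Fin 3} {w : GVert n}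
    (h : (gadgetGraph cl).Adj (GVert.u i o j) w) :
    w = GVert.s ∨ (∃ j', j' ≠ j ∧ w = GVert.u i o j') ∨ w = GVert.v i o j := by
  rw [gadgetGraph, SimpleGraph.fromRel_adj] at h
  rcases h with ⟨-, h | h⟩
  · cases h with
    | tri i o h => exact Or.inr (Or.inl ⟨_, Ne.symm h, rfl⟩)
    | mat => exact Or.inr (Or.inr rfl)
  · cases h with
    | star => exact Or.inl rfl
    | tri i o h => exact Or.inr (Or.inl ⟨_, h, rfl⟩)

/-- All colored edges at `s` are oriented away from `s`. -/
private lemma s_out {α : Type*} [DecidableEq α] {n : ℕ} (cl : Fin n → Fin 3 → α)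
    {E1 E2 : Set (Sym2 (GVert n))} (hdisj : Disjoint E1 E2)
    (hun : E1 ∪ E2 = (gadgetGraph cl).edgeSet)
    {d1 d2 : GVert n → GVert n → Prop}
    (h1 : IsOrientation E1 d1) (h2 : IsOrientation E2 d2)
    (hc1 : Nat.card {w // d1 GVert.s w} = 3 * n)
    (hc2 : Nat.card {w // d2 GVert.s w} = 3 * n) :
    ∀ w, s(GVert.s, w) ∈ E1 → d1 GVert.s w := by
  have hN : {w : GVert n | s(GVert.s, w) ∈ (gadgetGraph cl).edgeSet}.ncard ≤ 6 * n := by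
    rw [← range_card (n := n)]
    refine Set.ncard_le_ncard ?_ (Set.toFinite _)
    intro w hw
    obtain ⟨i, o, j, rfl⟩ := adj_s ((gadgetGraph cl).mem_edgeSet.mp hw)
    exact ⟨(i, o, j), rfl⟩
  have := count_aux (n := n)
    {w : GVert n | s(GVert.s, w) ∈ (gadgetGraph cl).edgeSet}
    {w | s(GVert.s, w) ∈ E1} {w | s(GVert.s, w) ∈ E2}
    {w | d1 GVert.s w} {w | d2 GVert.s w}
    (fun w hw => h1.1 _ _ hw) (fun w hw => h2.1 _ _ hw)
    (by
      rw [Set.disjoint_left] at hdisj ⊢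
      exact fun w hw hw' => hdisj hw hw')
    (by ext w; simp only [Set.mem_union, Set.mem_setOf_eq, ← hun])
    hN
    (by rw [← Nat.card_coe_set_eq]; exact hc1)
    (by rw [← Nat.card_coe_set_eq]; exact hc2)
  exact fun w hw => this hw

/-- If no matching edge of the gadget `(i, o)` lies in the tree `T`, we derive a
contradiction. -/
private lemma gadget_aux {α : Type*} [DecidableEq α] {n : ℕ} {cl : Fin n → Fin 3 → α}
    {T : SimpleGraph (GVert n)} (hle : T ≤ gadgetGraph cl) (hac : T.IsAcyclic)
    {d : GVert n → GVert n → Prop} (hd : IsOrientation T.edgeSet d)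
    (hs : ∀ w, s(GVert.s, w) ∈ T.edgeSet → d GVert.s w)
    (i : Fin n) (o : Bool)
    (hout : ∀ j : Fin 3, ∃ w, d (GVert.u i o j) w)
    (hmat : ∀ j : Fin 3, s(GVert.u i o j, GVert.v i o j) ∉ T.edgeSet) : False := by
  have key : ∀ j : Fin 3, ∃ j', j' ≠ j ∧ d (GVert.u i o j) (GVert.u i o j') := by
    intro j
    obtain ⟨w, hw⟩ := hout j
    have hmem : s(GVert.u i o j, w) ∈ T.edgeSet := hd.1 _ _ hw
    have hadj : (gadgetGraph cl).Adj (GVert.u i o j) w :=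
      (gadgetGraph cl).mem_edgeSet.mp (SimpleGraph.edgeSet_mono hle hmem)
    rcases adj_u hadj with rfl | ⟨j', hne, rfl⟩ | rfl
    · have hmem' : s(GVert.s, GVert.u i o j) ∈ T.edgeSet := by rwa [Sym2.eq_swap] at hmem
      exact absurd ⟨hs _ hmem', hw⟩ ((hd.2 _ _ hmem').2)
    · exact ⟨j', hne, hw⟩
    · exact absurd hmem (hmat j)
  choose g hg1 hg2 using key
  have hT : ∀ j, T.Adj (GVert.u i o j) (GVert.u i o (g j)) := fun j =>
    T.mem_edgeSet.mp (hd.1 _ _ (hg2 j))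
  by_cases h2 : ∃ j, g (g j) = j
  · obtain ⟨j, hj⟩ := h2
    refine (hd.2 _ _ (hd.1 _ _ (hg2 j))).2 ⟨hg2 j, ?_⟩
    have := hg2 (g j); rwa [hj] at this
  · push_neg at h2
    have key3 : ∀ x y z w : Fin 3, y ≠ x → z ≠ y → z ≠ x → w ≠ z → w ≠ y → w = x := by decide
    have h0 : g (g (g 0)) = 0 :=
      key3 0 (g 0) (g (g 0)) (g (g (g 0)))
        (hg1 0) (hg1 (g 0)) (h2 0) (hg1 (g (g 0))) (h2 (g 0))
    have hca := hT (g (g 0)); rw [h0] at hca; exact no_triangle hac (hT 0) (hT (g 0)) hca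

/-- In every `(b,r)`-partition of `G(Π)`, for every clause
gadget (original or copy), the matching `E^C` contains at least one blue edge
and at least one red edge. -/
theorem stmt6 {α : Type*} [DecidableEq α] {n : ℕ} (cl : Fin n → Fin 3 → α)
    (hcl : ∀ i, Function.Injective (cl i)) (B R : SimpleGraph (GVert n))
    (hBR : IsBRPartition (gadgetGraph cl) (bvec n) (rvec n) B R) :
    ∀ (i : Fin n) (o : Bool),
      (∃ j : Fin 3, s(GVert.u i o j, GVert.v i o j) ∈ B.edgeSet) ∧
      (∃ j : Fin 3, s(GVert.u i o j, GVert.v i o j) ∈ R.edgeSet) := by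
  obtain ⟨⟨hBle, hRle, hBtree, hRtree, hdisj, hunion⟩, ⟨dB, hdBo, hdBc⟩, ⟨dR, hdRo, hdRc⟩⟩ := hBR
  have hcBs : Nat.card {w // dB GVert.s w} = 3 * n := hdBc GVert.s
  have hcRs : Nat.card {w // dR GVert.s w} = 3 * n := hdRc GVert.s
  have hsB := s_out cl hdisj hunion hdBo hdRo hcBs hcRs
  have hsR := s_out cl hdisj.symm (by rw [Set.union_comm]; exact hunion) hdRo hdBo hcRs hcBs
  have houtB : ∀ (i : Fin n) (o : Bool) (j : Fin 3), ∃ w, dB (GVert.u i o j) w := by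
    intro i o j
    have h := hdBc (GVert.u i o j)
    have : Nonempty {w // dB (GVert.u i o j) w} :=
      (Nat.card_pos_iff.mp (by rw [h]; exact Nat.one_pos)).1
    obtain ⟨⟨w, hw⟩⟩ := this
    exact ⟨w, hw⟩
  have houtR : ∀ (i : Fin n) (o : Bool) (j : Fin 3), ∃ w, dR (GVert.u i o j) w := by
    intro i o j
    have h := hdRc (GVert.u i o j)
    have : Nonempty {w // dR (GVert.u i o j) w} :=
      (Nat.card_pos_iff.mp (by rw [h]; exact Nat.one_pos)).1
    obtain ⟨⟨w, hw⟩⟩ := this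
    exact ⟨w, hw⟩
  intro i o
  constructor
  · by_contra h
    push_neg at h
    exact gadget_aux hBle hBtree.IsAcyclic hdBo hsB i o (houtB i o) h
  · by_contra h
    push_neg at h
    exact gadget_aux hRle hRtree.IsAcyclic hdRo hsR i o (houtR i o) h
end

section
/- Let Π be an instance of NotAllEqual 3-SAT with n clauses and G(Π)=(V,E), b, r the associated construction. In every (b,r)-partition of E, for every clause C (original or copy), the subgraph of the blue spanning tree induced on {s} ∪ U^C is connected, and the subgraph of the red spanning tree induced on {s} ∪ U^C is connected. -/
/- ### Auxiliary material for the proof of `stmt7` -/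

namespace Stmt7Aux

open SimpleGraph

/-- The six edges of `K₄`. -/
def pr : Fin 6 → Fin 4 × Fin 4
  | 0 => (0,1) | 1 => (0,2) | 2 => (0,3) | 3 => (1,2) | 4 => (1,3) | 5 => (2,3)

/-- The "blue" graph on four vertices determined by a coloring of `K₄`'s edges. -/
def mkB (c : Fin 6 → Bool) : SimpleGraph (Fin 4) where
  Adj a b := a ≠ b ∧ ∃ k, c k = true ∧ (pr k = (a, b) ∨ pr k = (b, a))
  symm := by
    refine ⟨?_⟩; rintro a b ⟨h, k, hk, hp⟩
    exact ⟨h.symm, k, hk, hp.symm⟩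
  loopless := by refine ⟨?_⟩; rintro a ⟨h, -⟩; exact h rfl

/-- The "red" graph on four vertices determined by a coloring of `K₄`'s edges. -/
def mkR (c : Fin 6 → Bool) : SimpleGraph (Fin 4) where
  Adj a b := a ≠ b ∧ ¬ ∃ k, c k = true ∧ (pr k = (a, b) ∨ pr k = (b, a))
  symm := by
    refine ⟨?_⟩; rintro a b ⟨h, hn⟩
    exact ⟨h.symm, fun ⟨k, hk, hp⟩ => hn ⟨k, hk, hp.symm⟩⟩
  loopless := by refine ⟨?_⟩; rintro a ⟨h, -⟩; exact h rfl

instance (c : Fin 6 → Bool) : DecidableRel (mkB c).Adj := fun a b =>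
  inferInstanceAs (Decidable (a ≠ b ∧ ∃ k, c k = true ∧ (pr k = (a, b) ∨ pr k = (b, a))))

instance (c : Fin 6 → Bool) : DecidableRel (mkR c).Adj := fun a b =>
  inferInstanceAs (Decidable (a ≠ b ∧ ¬ ∃ k, c k = true ∧ (pr k = (a, b) ∨ pr k = (b, a))))

/-- A certificate that a graph on 4 vertices contains a cycle (a triangle or
a quadrilateral). -/
def Cert (G : SimpleGraph (Fin 4)) : Prop :=
  (∃ a b c : Fin 4, G.Adj a b ∧ G.Adj b c ∧ G.Adj c a) ∨
    (∃ a b c d : Fin 4, a ≠ c ∧ b ≠ d ∧ G.Adj a b ∧ G.Adj b c ∧ G.Adj c d ∧ G.Adj d a)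

instance (G : SimpleGraph (Fin 4)) [DecidableRel G.Adj] : Decidable (Cert G) := by
  unfold Cert; infer_instance

set_option maxRecDepth 100000 in
set_option maxHeartbeats 4000000 in
/-- The decidable core: if the edges of `K₄` are split into a blue and a red
graph, then either both are connected, or one of them contains a short cycle. -/
theorem core : ∀ c : Fin 6 → Bool,
    ((mkB c).Preconnected ∧ (mkR c).Preconnected) ∨ Cert (mkB c) ∨ Cert (mkR c) := by
  decide

theorem not_isAcyclic_of_tri {V : Type*} {G : SimpleGraph V} {a b c : V}
    (hab : G.Adj a b) (hbc : G.Adj b c) (hca : G.Adj c a) : ¬ G.IsAcyclic := by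
  intro h
  refine h (Walk.cons hab (Walk.cons hbc (Walk.cons hca Walk.nil))) ?_
  have h1 := hab.ne
  have h2 := hbc.ne
  have h3 := hca.ne
  simp [Walk.isCycle_def, Walk.isTrail_def, Sym2.eq_iff, h1, h2, h3, Ne.symm h1, Ne.symm h2,
    Ne.symm h3, h1.symm, h2.symm, h3.symm]

theorem not_isAcyclic_of_quad {V : Type*} {G : SimpleGraph V} {a b c d : V}
    (hac : a ≠ c) (hbd : b ≠ d) (hab : G.Adj a b) (hbc : G.Adj b c) (hcd : G.Adj c d)
    (hda : G.Adj d a) : ¬ G.IsAcyclic := by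
  intro h
  refine h (Walk.cons hab (Walk.cons hbc (Walk.cons hcd (Walk.cons hda Walk.nil)))) ?_
  have h1 := hab.ne
  have h2 := hbc.ne
  have h3 := hcd.ne
  have h4 := hda.ne
  simp [Walk.isCycle_def, Walk.isTrail_def, Sym2.eq_iff, h1, h2, h3, h4, hac, hbd,
    Ne.symm h1, Ne.symm h2, Ne.symm h3, Ne.symm h4, Ne.symm hac, Ne.symm hbd]

theorem cert_elim {V : Type*} {G : SimpleGraph V} {H : SimpleGraph (Fin 4)}
    (f : Fin 4 → V) (hf : Function.Injective f)
    (hadj : ∀ a b, H.Adj a b → G.Adj (f a) (f b)) (hc : Cert H) : ¬ G.IsAcyclic := by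
  rcases hc with ⟨a, b, c, h1, h2, h3⟩ | ⟨a, b, c, d, hac, hbd, h1, h2, h3, h4⟩
  · exact not_isAcyclic_of_tri (hadj _ _ h1) (hadj _ _ h2) (hadj _ _ h3)
  · exact not_isAcyclic_of_quad (fun h => hac (hf h)) (fun h => hbd (hf h))
      (hadj _ _ h1) (hadj _ _ h2) (hadj _ _ h3) (hadj _ _ h4)

/-- The four vertices `s, u⁰, u¹, u²` of a clause gadget. -/
def emb {n : ℕ} (i : Fin n) (o : Bool) : Fin 4 → GVert n
  | 0 => .s
  | 1 => .u i o 0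
  | 2 => .u i o 1
  | 3 => .u i o 2

theorem emb_inj {n : ℕ} (i : Fin n) (o : Bool) : Function.Injective (emb i o) := by
  intro a b h
  fin_cases a <;> fin_cases b <;> simp_all [emb]

theorem pr_total : ∀ a b : Fin 4, a ≠ b → ∃ k, pr k = (a, b) ∨ pr k = (b, a) := by decide

end Stmt7Aux

/-- In every `(b,r)`-partition of `G(Π)`, for every clause
gadget (original or copy), the subgraphs of the blue tree and of the red tree
induced on `{s} ∪ U^C` are connected. -/

theorem stmt7 {α : Type*} [DecidableEq α] {n : ℕ} (cl : Fin n → Fin 3 → α)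
    (hcl : ∀ i, Function.Injective (cl i)) (B R : SimpleGraph (GVert n))
    (hBR : IsBRPartition (gadgetGraph cl) (bvec n) (rvec n) B R) :
    ∀ (i : Fin n) (o : Bool),
      (B.induce ({GVert.s} ∪ {w | ∃ j : Fin 3, w = GVert.u i o j} :
        Set (GVert n))).Connected ∧
      (R.induce ({GVert.s} ∪ {w | ∃ j : Fin 3, w = GVert.u i o j} :
        Set (GVert n))).Connected := by
  classical
  obtain ⟨⟨hBle, hRle, hBtree, hRtree, hdisj, huni⟩, -, -⟩ := hBR
  intro i o
  set S : Set (GVert n) :=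
    ({GVert.s} ∪ {w | ∃ j : Fin 3, w = GVert.u i o j} : Set (GVert n)) with hS
  have hmem : ∀ k : Fin 4, Stmt7Aux.emb i o k ∈ S := by
    intro k
    fin_cases k
    · exact Or.inl rfl
    · exact Or.inr ⟨0, rfl⟩
    · exact Or.inr ⟨1, rfl⟩
    · exact Or.inr ⟨2, rfl⟩
  -- the gadget induces a `K₄` in `G(Π)`
  have hadjG : ∀ a b : Fin 4, a ≠ b →
      (gadgetGraph cl).Adj (Stmt7Aux.emb i o a) (Stmt7Aux.emb i o b) := by
    intro a b hab
    have hne : Stmt7Aux.emb i o a ≠ Stmt7Aux.emb i o b := fun h => hab (Stmt7Aux.emb_inj i o h)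
    refine (SimpleGraph.fromRel_adj _ _ _).mpr ⟨hne, ?_⟩
    fin_cases a <;> fin_cases b <;>
      first
        | exact absurd rfl hab
        | exact Or.inl (EdgeSpec.star i o _)
        | exact Or.inr (EdgeSpec.star i o _)
        | exact Or.inl (EdgeSpec.tri i o (by decide))
        | exact Or.inr (EdgeSpec.tri i o (by decide))
  have hcov : ∀ a b : Fin 4, a ≠ b →
      B.Adj (Stmt7Aux.emb i o a) (Stmt7Aux.emb i o b) ∨ R.Adj (Stmt7Aux.emb i o a) (Stmt7Aux.emb i o b) := by
    intro a b hab
    have h1 : s(Stmt7Aux.emb i o a, Stmt7Aux.emb i o b) ∈ (gadgetGraph cl).edgeSet :=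
      (SimpleGraph.mem_edgeSet _).mpr (hadjG a b hab)
    rw [← huni] at h1
    exact h1.imp (SimpleGraph.mem_edgeSet _).mp (SimpleGraph.mem_edgeSet _).mp
  have hdj : ∀ x y : GVert n, B.Adj x y → R.Adj x y → False := fun x y hb hr =>
    Set.disjoint_left.mp hdisj ((SimpleGraph.mem_edgeSet _).mpr hb)
      ((SimpleGraph.mem_edgeSet _).mpr hr)
  -- the boolean edge coloring of the gadget `K₄`
  set c : Fin 6 → Bool :=
    fun k => decide (B.Adj (Stmt7Aux.emb i o (Stmt7Aux.pr k).1) (Stmt7Aux.emb i o (Stmt7Aux.pr k).2)) with hc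
  have hB4 : ∀ a b : Fin 4, (Stmt7Aux.mkB c).Adj a b ↔ B.Adj (Stmt7Aux.emb i o a) (Stmt7Aux.emb i o b) := by
    intro a b
    constructor
    · rintro ⟨hab, k, hk, hp | hp⟩ <;>
        · rw [hc] at hk
          simp only [decide_eq_true_eq] at hk
          rw [hp] at hk
          first | exact hk | exact hk.symm
    · intro hb
      have hab : a ≠ b := by
        rintro rfl
        exact B.irrefl hb
      obtain ⟨k, hp | hp⟩ := Stmt7Aux.pr_total a b hab <;>
        refine ⟨hab, k, ?_, by tauto⟩ <;>
          · rw [hc]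
            simp only [decide_eq_true_eq]
            rw [hp]
            first | exact hb | exact hb.symm
  have hR4 : ∀ a b : Fin 4, (Stmt7Aux.mkR c).Adj a b ↔ R.Adj (Stmt7Aux.emb i o a) (Stmt7Aux.emb i o b) := by
    intro a b
    constructor
    · rintro ⟨hab, hn⟩
      rcases hcov a b hab with hb | hr
      · exfalso
        obtain ⟨k, hp | hp⟩ := Stmt7Aux.pr_total a b hab <;>
          refine hn ⟨k, ?_, by tauto⟩ <;>
            · rw [hc]
              simp only [decide_eq_true_eq]
              rw [hp]
              first | exact hb | exact hb.symm
      · exact hr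
    · intro hr
      have hab : a ≠ b := by
        rintro rfl
        exact R.irrefl hr
      refine ⟨hab, ?_⟩
      rintro ⟨k, hk, hp | hp⟩ <;>
        · rw [hc] at hk
          simp only [decide_eq_true_eq] at hk
          rw [hp] at hk
          first | exact hdj _ _ hk hr | exact hdj _ _ hk.symm hr
  have hBac : B.IsAcyclic := ((SimpleGraph.isTree_iff _).mp hBtree).2
  have hRac : R.IsAcyclic := ((SimpleGraph.isTree_iff _).mp hRtree).2
  rcases Stmt7Aux.core c with ⟨hcB, hcR⟩ | hcert | hcert
  · -- both `K₄`-restrictions are connected; transfer along the embedding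
    have key : ∀ (H : SimpleGraph (GVert n)) (H4 : SimpleGraph (Fin 4)),
        (∀ a b : Fin 4, H4.Adj a b ↔ H.Adj (Stmt7Aux.emb i o a) (Stmt7Aux.emb i o b)) →
        H4.Preconnected → (H.induce S).Connected := by
      intro H H4 hiff hpre
      let hom : H4 →g H.induce S :=
        ⟨fun k => ⟨Stmt7Aux.emb i o k, hmem k⟩, fun {a b} h => by
          simpa using (hiff a b).mp h⟩
      have hsurj : Function.Surjective hom := by
        rintro ⟨w, hw | ⟨j, rfl⟩⟩
        · refine ⟨0, Subtype.ext ?_⟩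
          exact hw.symm
        · fin_cases j
          · refine ⟨1, Subtype.ext ?_⟩
            rfl
          · refine ⟨2, Subtype.ext ?_⟩
            rfl
          · refine ⟨3, Subtype.ext ?_⟩
            rfl
      rw [SimpleGraph.connected_iff]
      exact ⟨hpre.map hom hsurj, ⟨⟨GVert.s, Or.inl rfl⟩⟩⟩
    exact ⟨key B (Stmt7Aux.mkB c) hB4 hcB, key R (Stmt7Aux.mkR c) hR4 hcR⟩
  · exact absurd hBac
      (Stmt7Aux.cert_elim (Stmt7Aux.emb i o) (Stmt7Aux.emb_inj i o) (fun a b h => (hB4 a b).mp h) hcert)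
  · exact absurd hRac
      (Stmt7Aux.cert_elim (Stmt7Aux.emb i o) (Stmt7Aux.emb_inj i o) (fun a b h => (hR4 a b).mp h) hcert)
end
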